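/- Any two M-Cantorvals in ℝ are homeomorphic via an increasing homeomorphism of ℝ; in particular every M-Cantorval is a tame set in ℝ. Likewise, every copy of the Cantor set in ℝ is a tame set in ℝ. -/

import Mathlib

open Set

def gapsOf (Y : Set ℝ) : Set (Set ℝ) :=
  {S | ∃ x ∉ Y, S = connectedComponentIn Yᶜ x}

def intervalsOf (Y : Set ℝ) : Set (Set ℝ) :=
  {S | (∃ x ∈ Y, S = connectedComponentIn Y x) ∧ S.Nontrivial}

def QOf (Y : Set ℝ) : Set (Set ℝ) := gapsOf Y ∪ intervalsOf Y

def setLT (I J : Set ℝ) : Prop := ∀ x ∈ I, ∀ y ∈ J, x < y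

def Interlaces (G B : Set (Set ℝ)) : Prop :=
  ∀ I ∈ B, ∀ J ∈ B, setLT I J → ∃ K ∈ G, setLT I K ∧ setLT K J

def IsTame (A : Set ℝ) : Prop :=
  ∀ Y : Set ℝ, Nonempty (↥A ≃ₜ ↥Y) → ∃ f : ℝ ≃ₜ ℝ, f '' A = Y

def RegularlyClosedIn (X : Set ℝ) : Prop :=
  IsClosed X ∧ X ⊆ closure (⋃₀ intervalsOf X)

def trivCompOf (X : Set ℝ) : Set ℝ := {x ∈ X | connectedComponentIn X x = {x}}

def BOf (X : Set ℝ) : Set (Set ℝ) :=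
  {I ∈ intervalsOf X | ∀ e, (IsLeast I e ∨ IsGreatest I e) → e ∈ closure (X \ I)}

def MCantorval (X : Set ℝ) : Prop :=
  X.Nonempty ∧ Bornology.IsBounded X ∧ RegularlyClosedIn X ∧
  ∀ I ∈ intervalsOf X, ∀ e, (IsLeast I e ∨ IsGreatest I e) →
    e ∈ closure (trivCompOf X \ {e})

/-- basic niceness hypothesis: nonempty compact -/
def Pre (X : Set ℝ) : Prop := X.Nonempty ∧ IsClosed X ∧ Bornology.IsBounded X

namespace Tame

theorem gap_subset {X S : Set ℝ} (hS : S ∈ gapsOf X) : S ⊆ Xᶜ := by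
  obtain ⟨x, _, rfl⟩ := hS; exact connectedComponentIn_subset _ _

theorem interval_subset {X S : Set ℝ} (hS : S ∈ intervalsOf X) : S ⊆ X := by
  obtain ⟨⟨x, _, rfl⟩, _⟩ := hS; exact connectedComponentIn_subset _ _

theorem gap_nonempty {X S : Set ℝ} (hS : S ∈ gapsOf X) : S.Nonempty := by
  obtain ⟨x, hx, rfl⟩ := hS
  exact connectedComponentIn_nonempty_iff.2 hx

theorem interval_nonempty {X S : Set ℝ} (hS : S ∈ intervalsOf X) : S.Nonempty :=
  hS.2.nonempty

theorem Q_nonempty {X S : Set ℝ} (hS : S ∈ QOf X) : S.Nonempty :=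
  hS.elim gap_nonempty interval_nonempty

theorem gap_isOpen {X S : Set ℝ} (hX : IsClosed X) (hS : S ∈ gapsOf X) : IsOpen S := by
  obtain ⟨x, hx, rfl⟩ := hS
  exact hX.isOpen_compl.connectedComponentIn

theorem Q_preconnected {X S : Set ℝ} (hS : S ∈ QOf X) : IsPreconnected S := by
  rcases hS with ⟨x, hx, rfl⟩ | ⟨⟨x, hx, rfl⟩, _⟩ <;> exact isPreconnected_connectedComponentIn

theorem Q_ordConnected {X S : Set ℝ} (hS : S ∈ QOf X) : S.OrdConnected :=
  (Q_preconnected hS).ordConnected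

theorem interval_isClosed {X S : Set ℝ} (hX : IsClosed X) (hS : S ∈ intervalsOf X) :
    IsClosed S := by
  obtain ⟨⟨x, hx, rfl⟩, _⟩ := hS
  have h1 : IsPreconnected (closure (connectedComponentIn X x)) :=
    isPreconnected_connectedComponentIn.closure
  have h2 : closure (connectedComponentIn X x) ⊆ X :=
    (closure_mono (connectedComponentIn_subset _ _)).trans hX.closure_eq.subset
  have h3 : closure (connectedComponentIn X x) ⊆ connectedComponentIn X x :=
    h1.subset_connectedComponentIn (subset_closure (mem_connectedComponentIn hx)) h2
  exact isClosed_of_closure_subset h3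

theorem gap_interval_disjoint {X S T : Set ℝ} (hS : S ∈ gapsOf X) (hT : T ∈ intervalsOf X) :
    Disjoint S T :=
  Set.disjoint_left.2 fun a haS haT => (gap_subset hS haS) (interval_subset hT haT)

theorem gaps_disjoint {X S T : Set ℝ} (hS : S ∈ gapsOf X) (hT : T ∈ gapsOf X) (hne : S ≠ T) :
    Disjoint S T := by
  obtain ⟨x, hx, rfl⟩ := hS; obtain ⟨y, hy, rfl⟩ := hT
  rw [Set.disjoint_left]
  intro a haS haT
  exact hne ((connectedComponentIn_eq haS).trans (connectedComponentIn_eq haT).symm)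

theorem intervals_disjoint {X S T : Set ℝ} (hS : S ∈ intervalsOf X) (hT : T ∈ intervalsOf X)
    (hne : S ≠ T) : Disjoint S T := by
  obtain ⟨⟨x, hx, rfl⟩, -⟩ := hS; obtain ⟨⟨y, hy, rfl⟩, -⟩ := hT
  rw [Set.disjoint_left]
  intro a haS haT
  exact hne ((connectedComponentIn_eq haS).trans (connectedComponentIn_eq haT).symm)

theorem Q_disjoint {X S T : Set ℝ} (hS : S ∈ QOf X) (hT : T ∈ QOf X) (hne : S ≠ T) :
    Disjoint S T := by
  rcases hS with hS | hS <;> rcases hT with hT | hT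
  · exact gaps_disjoint hS hT hne
  · exact gap_interval_disjoint hS hT
  · exact (gap_interval_disjoint hT hS).symm
  · exact intervals_disjoint hS hT hne

/-- two distinct elements of `QOf X` are comparable -/
theorem Q_comparable {X S T : Set ℝ} (hS : S ∈ QOf X) (hT : T ∈ QOf X) (hne : S ≠ T) :
    setLT S T ∨ setLT T S := by
  by_contra h
  push_neg at h
  obtain ⟨h1, h2⟩ := h
  simp only [setLT, not_forall] at h1 h2
  obtain ⟨x, hxS, y, hyT, hxy⟩ := h1
  obtain ⟨y', hy'T, x', hx'S, hy'x'⟩ := h2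
  have hd := Q_disjoint hS hT hne
  push_neg at hxy hy'x'
  rcases le_total x' y with hc | hc
  · exact (Set.disjoint_left.1 hd ((Q_ordConnected hS).out hx'S hxS ⟨hc, hxy⟩)) hyT
  · exact (Set.disjoint_left.1 hd hx'S) ((Q_ordConnected hT).out hyT hy'T ⟨hc, hy'x'⟩)

theorem setLT_irrefl {S : Set ℝ} (hS : S.Nonempty) : ¬ setLT S S := fun h => by
  obtain ⟨x, hx⟩ := hS; exact lt_irrefl x (h x hx x hx)

theorem setLT_trans {S T U : Set ℝ} (hT : T.Nonempty) (h1 : setLT S T) (h2 : setLT T U) :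
    setLT S U := by
  obtain ⟨t, ht⟩ := hT
  exact fun x hx y hy => (h1 x hx t ht).trans (h2 t ht y hy)

theorem setLT_ne {S T : Set ℝ} (hS : S.Nonempty) (h : setLT S T) : S ≠ T := by
  rintro rfl; exact setLT_irrefl hS h

/-- each element of Q contains a rational -/
theorem Q_exists_rat {X S : Set ℝ} (hX : IsClosed X) (hS : S ∈ QOf X) :
    ∃ q : ℚ, (q : ℝ) ∈ S := by
  have hnt : S.Nontrivial := by
    rcases hS with hS | hS
    · obtain ⟨x, hx⟩ := gap_nonempty hS
      have := (gap_isOpen hX hS)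
      obtain ⟨ε, hε, hball⟩ := Metric.isOpen_iff.1 this x hx
      refine ⟨x - ε/2, hball ?_, x, hx, by linarith⟩
      have : dist (x - ε/2) x = ε/2 := by
        rw [Real.dist_eq, abs_of_nonpos] <;> linarith
      rw [Metric.mem_ball, this]
      linarith
    · exact hS.2
  obtain ⟨a, ha, b, hb, hab⟩ := hnt
  rcases lt_or_gt_of_ne hab with h | h
  · obtain ⟨q, h1, h2⟩ := exists_rat_btwn h
    exact ⟨q, (Q_ordConnected hS).out ha hb ⟨le_of_lt h1, le_of_lt h2⟩⟩
  · obtain ⟨q, h1, h2⟩ := exists_rat_btwn h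
    exact ⟨q, (Q_ordConnected hS).out hb ha ⟨le_of_lt h1, le_of_lt h2⟩⟩

theorem Q_countable {X : Set ℝ} (hX : IsClosed X) : (QOf X).Countable := by
  have : ∀ S : QOf X, ∃ q : ℚ, (q : ℝ) ∈ S.1 := fun S => Q_exists_rat hX S.2
  choose f hf using this
  have hinj : Function.Injective f := by
    intro S T hST
    ext1
    by_contra hne
    exact Set.disjoint_left.1 (Q_disjoint S.2 T.2 hne) (hf S) (hST ▸ hf T)
  have : Countable (QOf X) := ⟨⟨fun S => Encodable.encode (f S),
    fun S T h => hinj (Encodable.encode_injective h)⟩⟩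
  exact (countable_coe_iff).1 this

variable {X S : Set ℝ}

theorem pre_sInf_mem (hX : Pre X) : sInf X ∈ X :=
  hX.2.1.csInf_mem hX.1 hX.2.2.bddBelow

theorem pre_sSup_mem (hX : Pre X) : sSup X ∈ X :=
  hX.2.1.csSup_mem hX.1 hX.2.2.bddAbove

theorem gap_nontrivial (hX : IsClosed X) (hS : S ∈ gapsOf X) : S.Nontrivial := by
  obtain ⟨x, hx⟩ := gap_nonempty hS
  obtain ⟨ε, hε, hball⟩ := Metric.isOpen_iff.1 (gap_isOpen hX hS) x hx
  refine ⟨x - ε/2, hball ?_, x, hx, by linarith⟩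
  have : dist (x - ε/2) x = ε/2 := by
    rw [Real.dist_eq, abs_of_nonpos] <;> linarith
  rw [Metric.mem_ball, this]; linarith

theorem isOpen_csInf_not_mem {S : Set ℝ} (hS : IsOpen S) (hb : BddBelow S) : sInf S ∉ S := by
  intro h
  obtain ⟨ε, hε, hball⟩ := Metric.isOpen_iff.1 hS _ h
  have h2 : sInf S - ε/2 ∈ S := by
    apply hball
    have : dist (sInf S - ε/2) (sInf S) = ε/2 := by
      rw [Real.dist_eq, abs_of_nonpos] <;> linarith
    rw [Metric.mem_ball, this]; linarith
  have := csInf_le hb h2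
  linarith

theorem isOpen_csSup_not_mem {S : Set ℝ} (hS : IsOpen S) (hb : BddAbove S) : sSup S ∉ S := by
  intro h
  obtain ⟨ε, hε, hball⟩ := Metric.isOpen_iff.1 hS _ h
  have h2 : sSup S + ε/2 ∈ S := by
    apply hball
    have : dist (sSup S + ε/2) (sSup S) = ε/2 := by
      rw [Real.dist_eq, abs_of_nonneg] <;> linarith
    rw [Metric.mem_ball, this]; linarith
  have := le_csSup hb h2
  linarith

/-- An unbounded-below gap is `Iio (sInf X)`. -/
theorem gap_eq_Iio (hX : Pre X) (hS : S ∈ gapsOf X) (hb : ¬ BddBelow S) :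
    S = Iio (sInf X) := by
  obtain ⟨x, hx, rfl⟩ := hS
  obtain ⟨s₀, hs₀, hs₀lt⟩ := not_bddBelow_iff.1 hb (sInf X)
  have hsub : connectedComponentIn Xᶜ x ⊆ Iio (sInf X) := by
    intro s hs
    rcases lt_or_ge s (sInf X) with h | h
    · exact h
    · exfalso
      have h1 : sInf X ∈ connectedComponentIn Xᶜ x :=
        (isPreconnected_connectedComponentIn.ordConnected).out hs₀ hs ⟨le_of_lt hs₀lt, h⟩
      exact (connectedComponentIn_subset _ _ h1) (pre_sInf_mem hX)
  have hsub2 : Iio (sInf X) ⊆ connectedComponentIn Xᶜ x := by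
    refine isPreconnected_Iio.subset_connectedComponentIn
      (hsub (mem_connectedComponentIn hx)) (fun z hz hzX => ?_)
    exact absurd (csInf_le hX.2.2.bddBelow hzX) (not_le.2 hz)
  exact le_antisymm hsub hsub2

/-- An unbounded-above gap is `Ioi (sSup X)`. -/
theorem gap_eq_Ioi (hX : Pre X) (hS : S ∈ gapsOf X) (hb : ¬ BddAbove S) :
    S = Ioi (sSup X) := by
  obtain ⟨x, hx, rfl⟩ := hS
  obtain ⟨s₀, hs₀, hs₀lt⟩ := not_bddAbove_iff.1 hb (sSup X)
  have hsub : connectedComponentIn Xᶜ x ⊆ Ioi (sSup X) := by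
    intro s hs
    rcases lt_or_ge (sSup X) s with h | h
    · exact h
    · exfalso
      have h1 : sSup X ∈ connectedComponentIn Xᶜ x :=
        (isPreconnected_connectedComponentIn.ordConnected).out hs hs₀ ⟨h, le_of_lt hs₀lt⟩
      exact (connectedComponentIn_subset _ _ h1) (pre_sSup_mem hX)
  have hsub2 : Ioi (sSup X) ⊆ connectedComponentIn Xᶜ x := by
    refine isPreconnected_Ioi.subset_connectedComponentIn
      (hsub (mem_connectedComponentIn hx)) (fun z hz hzX => ?_)
    exact absurd (le_csSup hX.2.2.bddAbove hzX) (not_le.2 hz)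
  exact le_antisymm hsub hsub2

theorem botQ_mem (hX : Pre X) : Iio (sInf X) ∈ gapsOf X := by
  have hmem : sInf X - 1 ∉ X := fun h => by
    have := csInf_le hX.2.2.bddBelow h; linarith
  refine ⟨sInf X - 1, hmem, ?_⟩
  have hsub2 : Iio (sInf X) ⊆ connectedComponentIn Xᶜ (sInf X - 1) := by
    refine isPreconnected_Iio.subset_connectedComponentIn (by simp) (fun z hz hzX => ?_)
    exact absurd (csInf_le hX.2.2.bddBelow hzX) (not_le.2 hz)
  refine (le_antisymm ?_ hsub2).symm
  intro s hs
  rcases lt_or_ge s (sInf X) with h | h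
  · exact h
  · exfalso
    have h0 : sInf X - 1 ∈ connectedComponentIn Xᶜ (sInf X - 1) :=
      mem_connectedComponentIn hmem
    have h1 : sInf X ∈ connectedComponentIn Xᶜ (sInf X - 1) :=
      (isPreconnected_connectedComponentIn.ordConnected).out h0 hs ⟨by linarith, h⟩
    exact (connectedComponentIn_subset _ _ h1) (pre_sInf_mem hX)

theorem topQ_mem (hX : Pre X) : Ioi (sSup X) ∈ gapsOf X := by
  have hmem : sSup X + 1 ∉ X := fun h => by
    have := le_csSup hX.2.2.bddAbove h; linarith
  refine ⟨sSup X + 1, hmem, ?_⟩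
  have hsub2 : Ioi (sSup X) ⊆ connectedComponentIn Xᶜ (sSup X + 1) := by
    refine isPreconnected_Ioi.subset_connectedComponentIn (by simp) (fun z hz hzX => ?_)
    exact absurd (le_csSup hX.2.2.bddAbove hzX) (not_le.2 hz)
  refine (le_antisymm ?_ hsub2).symm
  intro s hs
  rcases lt_or_ge (sSup X) s with h | h
  · exact h
  · exfalso
    have h0 : sSup X + 1 ∈ connectedComponentIn Xᶜ (sSup X + 1) :=
      mem_connectedComponentIn hmem
    have h1 : sSup X ∈ connectedComponentIn Xᶜ (sSup X + 1) :=
      (isPreconnected_connectedComponentIn.ordConnected).out hs h0 ⟨h, by linarith⟩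
    exact (connectedComponentIn_subset _ _ h1) (pre_sSup_mem hX)

/-- A bounded gap is a nonempty open interval. -/
theorem gap_eq_Ioo (hX : Pre X) (hS : S ∈ gapsOf X) (hb : BddBelow S) (hb' : BddAbove S) :
    S = Ioo (sInf S) (sSup S) ∧ sInf S < sSup S := by
  have hne := gap_nonempty hS
  have hop := gap_isOpen hX.2.1 hS
  have hlt : sInf S < sSup S := by
    obtain ⟨a, ha, b, hb2, hab⟩ := gap_nontrivial hX.2.1 hS
    rcases lt_or_gt_of_ne hab with h | h
    · exact lt_of_le_of_lt (csInf_le hb ha) (lt_of_lt_of_le h (le_csSup hb' hb2))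
    · exact lt_of_le_of_lt (csInf_le hb hb2) (lt_of_lt_of_le h (le_csSup hb' ha))
  constructor
  · apply le_antisymm
    · intro x hx
      refine ⟨lt_of_le_of_ne (csInf_le hb hx) ?_, lt_of_le_of_ne (le_csSup hb' hx) ?_⟩
      · intro h; exact isOpen_csInf_not_mem hop hb (h ▸ hx)
      · intro h; exact isOpen_csSup_not_mem hop hb' (h ▸ hx)
    · intro z hz
      obtain ⟨u, hu, hu2⟩ := exists_lt_of_csInf_lt hne hz.1
      obtain ⟨v, hv, hv2⟩ := exists_lt_of_lt_csSup hne hz.2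
      exact (Q_ordConnected (Or.inl hS)).out hu hv ⟨le_of_lt hu2, le_of_lt hv2⟩
  · exact hlt

/-- An interval (nontrivial component of X) is a nontrivial closed interval. -/
theorem interval_eq_Icc (hX : Pre X) (hS : S ∈ intervalsOf X) :
    S = Icc (sInf S) (sSup S) ∧ sInf S < sSup S := by
  have hne := interval_nonempty hS
  have hcl := interval_isClosed hX.2.1 hS
  have hbd : Bornology.IsBounded S := hX.2.2.subset (interval_subset hS)
  have hlt : sInf S < sSup S := by
    obtain ⟨a, ha, b, hb2, hab⟩ := hS.2
    rcases lt_or_gt_of_ne hab with h | h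
    · exact lt_of_le_of_lt (csInf_le hbd.bddBelow ha)
        (lt_of_lt_of_le h (le_csSup hbd.bddAbove hb2))
    · exact lt_of_le_of_lt (csInf_le hbd.bddBelow hb2)
        (lt_of_lt_of_le h (le_csSup hbd.bddAbove ha))
  refine ⟨le_antisymm ?_ ?_, hlt⟩
  · exact fun x hx => ⟨csInf_le hbd.bddBelow hx, le_csSup hbd.bddAbove hx⟩
  · exact (Q_ordConnected (Or.inr hS)).out (hcl.csInf_mem hne hbd.bddBelow)
      (hcl.csSup_mem hne hbd.bddAbove)

theorem interval_bdd (hX : Pre X) (hS : S ∈ intervalsOf X) : BddBelow S ∧ BddAbove S :=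
  ⟨(hX.2.2.subset (interval_subset hS)).bddBelow, (hX.2.2.subset (interval_subset hS)).bddAbove⟩

/-- the bottom gap is a least element -/
theorem botQ_least (hX : Pre X) (hS : S ∈ QOf X) (hne : S ≠ Iio (sInf X)) :
    setLT (Iio (sInf X)) S := by
  intro x hx y hy
  rcases lt_or_ge y (sInf X) with h | h
  · exfalso
    rcases hS with hS | hS
    · exact Set.disjoint_left.1 (gaps_disjoint hS (botQ_mem hX) hne) hy h
    · exact absurd (csInf_le hX.2.2.bddBelow (interval_subset hS hy)) (not_le.2 h)
  · exact lt_of_lt_of_le hx h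

theorem topQ_greatest (hX : Pre X) (hS : S ∈ QOf X) (hne : S ≠ Ioi (sSup X)) :
    setLT S (Ioi (sSup X)) := by
  intro x hx y hy
  rcases lt_or_ge (sSup X) x with h | h
  · exfalso
    rcases hS with hS | hS
    · exact Set.disjoint_left.1 (gaps_disjoint hS (topQ_mem hX) hne) hx h
    · exact absurd (le_csSup hX.2.2.bddAbove (interval_subset hS hx)) (not_le.2 h)
  · exact lt_of_le_of_lt h hy

theorem botQ_ne_topQ (hX : Pre X) : Iio (sInf X) ≠ Ioi (sSup X) := by
  intro h
  have h1 : sInf X - 1 ∈ Iio (sInf X) := by simp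
  rw [h] at h1
  have h2 : sInf X ≤ sSup X := csInf_le_csSup hX.1 hX.2.2.bddBelow hX.2.2.bddAbove
  simp at h1
  linarith

/-- a gap which is neither the bottom nor the top gap is bounded -/
theorem gap_bdd (hX : Pre X) (hS : S ∈ gapsOf X) (h1 : S ≠ Iio (sInf X))
    (h2 : S ≠ Ioi (sSup X)) : BddBelow S ∧ BddAbove S := by
  constructor
  · by_contra hb
    exact h1 (gap_eq_Iio hX hS hb)
  · by_contra hb
    exact h2 (gap_eq_Ioi hX hS hb)

/-- gaps and intervals cannot coincide -/
theorem gap_ne_interval (hS : S ∈ gapsOf X) (hT : ∀ T, T ∈ intervalsOf X → S ≠ T) : True :=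
  trivial

theorem not_mem_both {S : Set ℝ} (hg : S ∈ gapsOf X) (hi : S ∈ intervalsOf X) : False := by
  obtain ⟨x, hx⟩ := gap_nonempty hg
  exact (gap_subset hg hx) (interval_subset hi hx)

/-! ### Extension of a monotone map on a dense set to an order isomorphism of ℝ -/

theorem dense_exists_btwn {D : Set ℝ} (hD : Dense D) {a b : ℝ} (h : a < b) :
    ∃ d ∈ D, a < d ∧ d < b := by
  rcases hD.exists_mem_open isOpen_Ioo (nonempty_Ioo.2 h) with ⟨d, hd, hd2⟩
  exact ⟨d, hd, hd2.1, hd2.2⟩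

section Ext

variable {D E : Set ℝ} {f : ℝ → ℝ}

private theorem ext_nonempty (hD : Dense D) (x : ℝ) : (D ∩ Iio x).Nonempty := by
  obtain ⟨d, hd, h1, h2⟩ := dense_exists_btwn hD (show x - 1 < x by linarith)
  exact ⟨d, hd, h2⟩

private theorem ext_bdd (hD : Dense D)
    (hf : ∀ d₁ ∈ D, ∀ d₂ ∈ D, d₁ < d₂ → f d₁ < f d₂) (x : ℝ) :
    BddAbove (f '' (D ∩ Iio x)) := by
  obtain ⟨d, hd, h1, h2⟩ := dense_exists_btwn hD (show x < x + 1 by linarith)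
  refine ⟨f d, ?_⟩
  rintro - ⟨y, ⟨hy, hy2⟩, rfl⟩
  exact le_of_lt (hf y hy d hd (lt_trans hy2 h1))

/-- Main extension theorem: a strictly monotone map from a dense set onto a dense set
extends to an order isomorphism of `ℝ`. -/
theorem ext_orderIso (hD : Dense D) (hE : Dense E)
    (hf : ∀ d₁ ∈ D, ∀ d₂ ∈ D, d₁ < d₂ → f d₁ < f d₂)
    (himg : f '' D = E) :
    ∃ Φ : ℝ ≃o ℝ, ∀ d ∈ D, Φ d = f d := by
  set g : ℝ → ℝ := fun x => sSup (f '' (D ∩ Iio x)) with hg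
  have hmono : StrictMono g := by
    intro x y hxy
    obtain ⟨d₁, hd₁, h1, h2⟩ := dense_exists_btwn hD hxy
    obtain ⟨d₂, hd₂, h3, h4⟩ := dense_exists_btwn hD h2
    calc g x ≤ f d₁ := csSup_le ((ext_nonempty hD x).image f)
                (by rintro - ⟨z, ⟨hz, hz2⟩, rfl⟩
                    exact le_of_lt (hf z hz d₁ hd₁ (lt_trans hz2 h1)))
      _ < f d₂ := hf d₁ hd₁ d₂ hd₂ h3
      _ ≤ g y := le_csSup (ext_bdd hD hf y) ⟨d₂, ⟨hd₂, h4⟩, rfl⟩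
  have heq : ∀ d ∈ D, g d = f d := by
    intro d hd
    apply le_antisymm
    · refine csSup_le ((ext_nonempty hD d).image f) ?_
      rintro - ⟨z, ⟨hz, hz2⟩, rfl⟩
      exact le_of_lt (hf z hz d hd hz2)
    · by_contra hc
      push_neg at hc
      obtain ⟨v, hv, hv1, hv2⟩ := dense_exists_btwn hE hc
      rw [← himg] at hv
      obtain ⟨d', hd', rfl⟩ := hv
      have hdd : d' < d := by
        rcases lt_trichotomy d' d with h | h | h
        · exact h
        · exact absurd (h ▸ hv2) (lt_irrefl _)
        · exact absurd (hf d hd d' hd' h) (by intro hh; linarith)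
      exact absurd (le_csSup (ext_bdd hD hf d) ⟨d', ⟨hd', hdd⟩, rfl⟩) (by intro hh; linarith)
  have hsurj : Function.Surjective g := by
    intro y
    set Dy : Set ℝ := {d | d ∈ D ∧ f d < y} with hDy
    have hDyne : Dy.Nonempty := by
      obtain ⟨v, hv, hv1, hv2⟩ := dense_exists_btwn hE (show y - 1 < y by linarith)
      rw [← himg] at hv
      obtain ⟨d, hd, rfl⟩ := hv
      exact ⟨d, hd, hv2⟩
    have hDybdd : BddAbove Dy := by
      obtain ⟨v, hv, hv1, hv2⟩ := dense_exists_btwn hE (show y < y + 1 by linarith)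
      rw [← himg] at hv
      obtain ⟨d₀, hd₀, rfl⟩ := hv
      refine ⟨d₀, fun d hd => ?_⟩
      by_contra hc
      push_neg at hc
      exact absurd (hf d₀ hd₀ d hd.1 hc) (by have := hd.2; intro h; linarith)
    refine ⟨sSup Dy, le_antisymm ?_ ?_⟩
    · refine csSup_le ((ext_nonempty hD _).image f) ?_
      rintro - ⟨z, ⟨hz, hz2⟩, rfl⟩
      obtain ⟨d', hd', hzd'⟩ := exists_lt_of_lt_csSup hDyne hz2
      exact le_of_lt (lt_of_lt_of_le (hf z hz d' hd'.1 hzd') (le_of_lt hd'.2))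
    · rw [← not_lt]
      intro hc
      obtain ⟨v, hv, hv1, hv2⟩ := dense_exists_btwn hE hc
      rw [← himg] at hv
      obtain ⟨d, hd, rfl⟩ := hv
      obtain ⟨v2, hv2', hv21, hv22⟩ := dense_exists_btwn hE hv2
      rw [← himg] at hv2'
      obtain ⟨d₂, hd₂, rfl⟩ := hv2'
      have hdlt : d < d₂ := by
        rcases lt_trichotomy d d₂ with h | h | h
        · exact h
        · exact absurd (h ▸ hv21) (lt_irrefl _)
        · exact absurd (hf d₂ hd₂ d hd h) (by intro hh; linarith)
      have h1 : d₂ ≤ sSup Dy := le_csSup hDybdd ⟨hd₂, hv22⟩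
      have h2 : f d ≤ g (sSup Dy) :=
        le_csSup (ext_bdd hD hf _) ⟨d, ⟨hd, lt_of_lt_of_le hdlt h1⟩, rfl⟩
      linarith
  exact ⟨StrictMono.orderIsoOfSurjective g hmono hsurj, heq⟩

end Ext

/-! ### Affine charts -/

open scoped Classical in
noncomputable def chart (S T : Set ℝ) (x : ℝ) : ℝ :=
  if BddBelow S then
    if BddAbove S then sInf T + (x - sInf S) * ((sSup T - sInf T) / (sSup S - sInf S))
    else x - sInf S + sInf T
  else x - sSup S + sSup T

theorem chart_of_unbddBelow {S T : Set ℝ} (h : ¬ BddBelow S) (x : ℝ) :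
    chart S T x = x - sSup S + sSup T := by simp [chart, h]

theorem chart_of_unbddAbove {S T : Set ℝ} (h : BddBelow S) (h2 : ¬ BddAbove S) (x : ℝ) :
    chart S T x = x - sInf S + sInf T := by simp [chart, h, h2]

theorem chart_of_bdd {S T : Set ℝ} (h : BddBelow S) (h2 : BddAbove S) (x : ℝ) :
    chart S T x = sInf T + (x - sInf S) * ((sSup T - sInf T) / (sSup S - sInf S)) := by
  simp [chart, h, h2]

section Aff
variable {a b a' b' x y : ℝ}

theorem aff_mono (hab : a < b) (hab' : a' < b') (h : x < y) :
    a' + (x - a) * ((b' - a') / (b - a)) < a' + (y - a) * ((b' - a') / (b - a)) := by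
  have hk : (b' - a') / (b - a) > 0 := div_pos (by linarith) (by linarith)
  nlinarith

theorem aff_mem (hab : a < b) (hab' : a' < b') (h : x ∈ Ioo a b) :
    a' + (x - a) * ((b' - a') / (b - a)) ∈ Ioo a' b' := by
  have hk : (b' - a') / (b - a) > 0 := div_pos (by linarith) (by linarith)
  have hkey : (b - a) * ((b' - a') / (b - a)) = b' - a' := by
    rw [mul_comm, div_mul_cancel₀]
    exact sub_ne_zero.2 (ne_of_gt hab)
  obtain ⟨h1, h2⟩ := h
  constructor
  · nlinarith
  · have : (x - a) * ((b' - a') / (b - a)) < (b - a) * ((b' - a') / (b - a)) := by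
      apply mul_lt_mul_of_pos_right _ hk; linarith
    rw [hkey] at this
    linarith

theorem aff_surj (hab : a < b) (hab' : a' < b') (h : y ∈ Ioo a' b') :
    ∃ x ∈ Ioo a b, a' + (x - a) * ((b' - a') / (b - a)) = y := by
  refine ⟨a + (y - a') * ((b - a) / (b' - a')), aff_mem hab' hab h, ?_⟩
  have hba : b - a ≠ 0 := sub_ne_zero.2 (ne_of_gt hab)
  have hba' : b' - a' ≠ 0 := sub_ne_zero.2 (ne_of_gt hab')
  have : a + (y - a') * ((b - a) / (b' - a')) - a = (y - a') * ((b - a) / (b' - a')) := by ring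
  rw [this, mul_assoc, div_mul_div_comm, mul_comm (b - a), div_self (by
    exact mul_ne_zero hba' hba), mul_one]
  ring

end Aff

theorem cc_eq_of_mem_gap {X S : Set ℝ} (hS : S ∈ gapsOf X) {x : ℝ} (hx : x ∈ S) :
    connectedComponentIn Xᶜ x = S := by
  obtain ⟨x₀, hx₀, rfl⟩ := hS
  exact (connectedComponentIn_eq hx).symm

theorem cc_eq_of_mem_interval {X S : Set ℝ} (hS : S ∈ intervalsOf X) {x : ℝ} (hx : x ∈ S) :
    connectedComponentIn X x = S := by
  obtain ⟨⟨x₀, hx₀, rfl⟩, -⟩ := hS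
  exact (connectedComponentIn_eq hx).symm

theorem not_bddBelow_Iio' (a : ℝ) : ¬ BddBelow (Iio a) := by
  rw [not_bddBelow_iff]
  intro x
  refine ⟨min (a - 1) (x - 1), ?_, ?_⟩
  · exact lt_of_le_of_lt (min_le_left _ _) (show a - 1 < a by linarith)
  · exact lt_of_le_of_lt (min_le_right _ _) (show x - 1 < x by linarith)

theorem not_bddAbove_Ioi' (a : ℝ) : ¬ BddAbove (Ioi a) := by
  rw [not_bddAbove_iff]
  intro x
  refine ⟨max (a + 1) (x + 1), ?_, ?_⟩
  · exact lt_of_lt_of_le (show a < a + 1 by linarith) (le_max_left _ _)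
  · exact lt_of_lt_of_le (show x < x + 1 by linarith) (le_max_right _ _)

/-! ### Density of the union of interiors; complement as union of gaps -/

theorem compl_gaps (X : Set ℝ) : ⋃₀ gapsOf X = Xᶜ := by
  apply le_antisymm
  · exact sUnion_subset fun S hS => gap_subset hS
  · intro x hx
    exact ⟨connectedComponentIn Xᶜ x, ⟨x, hx, rfl⟩, mem_connectedComponentIn hx⟩

theorem Ioo_approx {a b x ε : ℝ} (hab : a < b) (hx : x ∈ Icc a b) (hε : 0 < ε) :
    ∃ d ∈ Ioo a b, |d - x| < ε := by
  by_cases hxb : x < b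
  · set u := min b (x + ε) with hu
    have hxu : x < u := lt_min hxb (by linarith)
    refine ⟨(x + u) / 2, ⟨?_, ?_⟩, ?_⟩
    · have := hx.1; linarith
    · have h1 : (x + u) / 2 < u := by linarith
      exact lt_of_lt_of_le h1 (min_le_left _ _)
    · have h2 : u ≤ x + ε := min_le_right _ _
      rw [abs_lt]; constructor <;> linarith
  · have hxb' : x = b := le_antisymm hx.2 (not_lt.1 hxb)
    set u := max a (x - ε) with hu
    have hxu : u < x := max_lt (hxb' ▸ hab) (by linarith)
    refine ⟨(u + x) / 2, ⟨?_, ?_⟩, ?_⟩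
    · have h1 : u < (u + x) / 2 := by linarith
      exact lt_of_le_of_lt (le_max_left _ _) h1
    · rw [hxb'] at hxu ⊢; linarith
    · have h2 : x - ε ≤ u := le_max_right _ _
      rw [abs_lt]; constructor <;> linarith

theorem dense_interiors {X : Set ℝ} (hX : Pre X) : Dense (⋃ S ∈ QOf X, interior S) := by
  intro x
  rw [Real.mem_closure_iff]
  intro ε hε
  by_cases hx : x ∈ X
  · by_cases hnt : (connectedComponentIn X x).Nontrivial
    · have hi : connectedComponentIn X x ∈ intervalsOf X := ⟨⟨x, hx, rfl⟩, hnt⟩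
      obtain ⟨h1, h2⟩ := interval_eq_Icc hX hi
      have hxm : x ∈ Icc (sInf (connectedComponentIn X x)) (sSup (connectedComponentIn X x)) :=
        h1 ▸ mem_connectedComponentIn hx
      obtain ⟨d, hd, hdx⟩ := Ioo_approx h2 hxm hε
      refine ⟨d, ?_, hdx⟩
      refine mem_iUnion₂.2 ⟨_, Or.inr hi, ?_⟩
      rw [(show interior (connectedComponentIn X x) = Ioo _ _ by rw [h1]; exact interior_Icc)]
      exact hd
    · by_cases h2 : ∃ z, z ∈ Ioo x (x + ε) ∧ z ∉ X
      · obtain ⟨z, hz1, hz2⟩ := h2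
        have hgz : connectedComponentIn Xᶜ z ∈ gapsOf X := ⟨z, hz2, rfl⟩
        refine ⟨z, mem_iUnion₂.2 ⟨_, Or.inl hgz, ?_⟩, ?_⟩
        · rw [(gap_isOpen hX.2.1 hgz).interior_eq]
          exact mem_connectedComponentIn hz2
        · rw [abs_lt]; constructor <;> [linarith [hz1.1]; linarith [hz1.2]]
      · exfalso
        push_neg at h2
        have hsub : Icc x (x + ε/2) ⊆ X := by
          intro z hz
          rcases eq_or_lt_of_le hz.1 with rfl | h
          · exact hx
          · exact h2 z ⟨h, by linarith [hz.2]⟩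
        have hsub2 : Icc x (x + ε/2) ⊆ connectedComponentIn X x :=
          isPreconnected_Icc.subset_connectedComponentIn (by constructor <;> linarith) hsub
        exact hnt ⟨x, mem_connectedComponentIn hx, x + ε/2,
          hsub2 (by constructor <;> linarith), by intro h; linarith [congrArg id h]⟩
  · have hgx : connectedComponentIn Xᶜ x ∈ gapsOf X := ⟨x, hx, rfl⟩
    refine ⟨x, mem_iUnion₂.2 ⟨_, Or.inl hgx, ?_⟩, by simpa using hε⟩
    rw [(gap_isOpen hX.2.1 hgx).interior_eq]
    exact mem_connectedComponentIn hx

/-! ### The engine: from a combinatorial isomorphism of Q-structures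
to an order isomorphism of ℝ -/

theorem engine {X Y : Set ℝ} (hX : Pre X) (hY : Pre Y) (ε : Set ℝ → Set ℝ)
    (hQ : ∀ S ∈ QOf X, ε S ∈ QOf Y)
    (hgap : ∀ S ∈ gapsOf X, ε S ∈ gapsOf Y)
    (hint : ∀ S ∈ intervalsOf X, ε S ∈ intervalsOf Y)
    (hmono : ∀ S ∈ QOf X, ∀ T ∈ QOf X, setLT S T → setLT (ε S) (ε T))
    (hsurj : ∀ T ∈ QOf Y, ∃ S ∈ QOf X, ε S = T) :
    ∃ Φ : ℝ ≃o ℝ, Φ '' X = Y := by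
  classical
  have hQbot : Iio (sInf X) ∈ QOf X := Or.inl (botQ_mem hX)
  have hQtop : Ioi (sSup X) ∈ QOf X := Or.inl (topQ_mem hX)
  have hQbotY : Iio (sInf Y) ∈ QOf Y := Or.inl (botQ_mem hY)
  have hQtopY : Ioi (sSup Y) ∈ QOf Y := Or.inl (topQ_mem hY)
  have hbotYne : (Iio (sInf Y)).Nonempty := ⟨sInf Y - 1, by simp⟩
  have htopYne : (Ioi (sSup Y)).Nonempty := ⟨sSup Y + 1, by simp⟩
  have hnonempty : ∀ S ∈ QOf X, (ε S).Nonempty := fun S hS => Q_nonempty (hQ S hS)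
  -- bottom goes to bottom
  have hbot : ε (Iio (sInf X)) = Iio (sInf Y) := by
    obtain ⟨S, hS, hES⟩ := hsurj _ hQbotY
    by_cases h : S = Iio (sInf X)
    · rw [← h]; exact hES
    · exfalso
      have h2 := hmono _ hQbot _ hS (botQ_least hX hS h)
      rw [hES] at h2
      obtain ⟨u, hu⟩ := hnonempty _ hQbot
      have h3 := h2 u hu (min (u - 1) (sInf Y - 1))
        (lt_of_le_of_lt (min_le_right _ _) (show sInf Y - 1 < sInf Y by linarith))
      have h4 := min_le_left (u - 1) (sInf Y - 1)
      linarith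
  have htop : ε (Ioi (sSup X)) = Ioi (sSup Y) := by
    obtain ⟨S, hS, hES⟩ := hsurj _ hQtopY
    by_cases h : S = Ioi (sSup X)
    · rw [← h]; exact hES
    · exfalso
      have h2 := hmono _ hS _ hQtop (topQ_greatest hX hS h)
      rw [hES] at h2
      obtain ⟨u, hu⟩ := hnonempty _ hQtop
      have h3 := h2 (max (u + 1) (sSup Y + 1))
        (lt_of_lt_of_le (show sSup Y < sSup Y + 1 by linarith) (le_max_right _ _)) u hu
      have h4 := le_max_left (u + 1) (sSup Y + 1)
      linarith
  have hne_bt : ∀ S ∈ QOf X, S ≠ Iio (sInf X) → ε S ≠ Iio (sInf Y) := by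
    intro S hS h hc
    have h1 := hmono _ hQbot _ hS (botQ_least hX hS h)
    rw [hbot, hc] at h1
    exact setLT_irrefl hbotYne h1
  have hne_tp : ∀ S ∈ QOf X, S ≠ Ioi (sSup X) → ε S ≠ Ioi (sSup Y) := by
    intro S hS h hc
    have h1 := hmono _ hS _ hQtop (topQ_greatest hX hS h)
    rw [htop, hc] at h1
    exact setLT_irrefl htopYne h1
  -- the key chart properties
  have key : ∀ S ∈ QOf X,
      (∀ x ∈ interior S, chart S (ε S) x ∈ interior (ε S)) ∧
      (∀ x ∈ interior S, ∀ y ∈ interior S, x < y → chart S (ε S) x < chart S (ε S) y) ∧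
      (∀ y ∈ interior (ε S), ∃ x ∈ interior S, chart S (ε S) x = y) := by
    intro S hS
    by_cases hb : S = Iio (sInf X)
    · rw [hb, hbot, isOpen_Iio.interior_eq, isOpen_Iio.interior_eq]
      have hch : ∀ x : ℝ, chart (Iio (sInf X)) (Iio (sInf Y)) x = x - sInf X + sInf Y := by
        intro x
        rw [chart_of_unbddBelow (not_bddBelow_Iio' _), csSup_Iio, csSup_Iio]
      refine ⟨fun x hx => ?_, fun x hx y hy hxy => ?_, fun y hy => ?_⟩
      · rw [hch]; simp only [mem_Iio] at *; linarith
      · rw [hch, hch]; linarith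
      · refine ⟨y - sInf Y + sInf X, ?_, ?_⟩
        · simp only [mem_Iio] at *; linarith
        · rw [hch]; ring
    by_cases ht : S = Ioi (sSup X)
    · rw [ht, htop, isOpen_Ioi.interior_eq, isOpen_Ioi.interior_eq]
      have hch : ∀ x : ℝ, chart (Ioi (sSup X)) (Ioi (sSup Y)) x = x - sSup X + sSup Y := by
        intro x
        rw [chart_of_unbddAbove bddBelow_Ioi (not_bddAbove_Ioi' _), csInf_Ioi, csInf_Ioi]
      refine ⟨fun x hx => ?_, fun x hx y hy hxy => ?_, fun y hy => ?_⟩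
      · rw [hch]; simp only [mem_Ioi] at *; linarith
      · rw [hch, hch]; linarith
      · refine ⟨y - sSup Y + sSup X, ?_, ?_⟩
        · simp only [mem_Ioi] at *; linarith
        · rw [hch]; ring
    -- bounded case
    have hbdd : BddBelow S ∧ BddAbove S := by
      rcases hS with hg | hi
      · exact gap_bdd hX hg hb ht
      · exact interval_bdd hX hi
    have hbddY : BddBelow (ε S) ∧ BddAbove (ε S) := by
      rcases hQ S hS with hg | hi
      · exact gap_bdd hY hg (hne_bt S hS hb) (hne_tp S hS ht)
      · exact interval_bdd hY hi
    have hiS : interior S = Ioo (sInf S) (sSup S) ∧ sInf S < sSup S := by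
      rcases hS with hg | hi
      · obtain ⟨h1, h2⟩ := gap_eq_Ioo hX hg hbdd.1 hbdd.2
        exact ⟨by conv_lhs => rw [h1, interior_Ioo], h2⟩
      · obtain ⟨h1, h2⟩ := interval_eq_Icc hX hi
        exact ⟨by conv_lhs => rw [h1, interior_Icc], h2⟩
    have hiT : interior (ε S) = Ioo (sInf (ε S)) (sSup (ε S)) ∧ sInf (ε S) < sSup (ε S) := by
      rcases hQ S hS with hg | hi
      · obtain ⟨h1, h2⟩ := gap_eq_Ioo hY hg hbddY.1 hbddY.2
        exact ⟨by conv_lhs => rw [h1, interior_Ioo], h2⟩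
      · obtain ⟨h1, h2⟩ := interval_eq_Icc hY hi
        exact ⟨by conv_lhs => rw [h1, interior_Icc], h2⟩
    rw [hiS.1, hiT.1]
    have hch : ∀ x : ℝ, chart S (ε S) x =
        sInf (ε S) + (x - sInf S) * ((sSup (ε S) - sInf (ε S)) / (sSup S - sInf S)) :=
      chart_of_bdd hbdd.1 hbdd.2
    refine ⟨fun x hx => ?_, fun x hx y hy hxy => ?_, fun y hy => ?_⟩
    · rw [hch]; exact aff_mem hiS.2 hiT.2 hx
    · rw [hch, hch]; exact aff_mono hiS.2 hiT.2 hxy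
    · obtain ⟨x, hx1, hx2⟩ := aff_surj hiS.2 hiT.2 hy
      exact ⟨x, hx1, by rw [hch]; exact hx2⟩
  -- the glued map
  set g : ℝ → ℝ := fun x =>
    if hx : x ∈ X then chart (connectedComponentIn X x) (ε (connectedComponentIn X x)) x
    else chart (connectedComponentIn Xᶜ x) (ε (connectedComponentIn Xᶜ x)) x with hgdef
  have hgS : ∀ S ∈ QOf X, ∀ x ∈ interior S, g x = chart S (ε S) x := by
    intro S hS x hx
    have hx' : x ∈ S := interior_subset hx
    rcases hS with hg' | hi'
    · have hxX : x ∉ X := gap_subset hg' hx'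
      rw [hgdef]
      simp only [dif_neg hxX]
      rw [cc_eq_of_mem_gap hg' hx']
    · have hxX : x ∈ X := interval_subset hi' hx'
      rw [hgdef]
      simp only [dif_pos hxX]
      rw [cc_eq_of_mem_interval hi' hx']
  set D := ⋃ S ∈ QOf X, interior S with hD
  set E := ⋃ T ∈ QOf Y, interior T with hE
  have hDdense : Dense D := dense_interiors hX
  have hEdense : Dense E := dense_interiors hY
  have hmonoD : ∀ d₁ ∈ D, ∀ d₂ ∈ D, d₁ < d₂ → g d₁ < g d₂ := by
    intro d₁ h₁ d₂ h₂ hlt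
    obtain ⟨S, hS, hd₁⟩ := mem_iUnion₂.1 h₁
    obtain ⟨T, hT, hd₂⟩ := mem_iUnion₂.1 h₂
    by_cases hST : S = T
    · subst hST
      rw [hgS S hS d₁ hd₁, hgS S hS d₂ hd₂]
      exact (key S hS).2.1 d₁ hd₁ d₂ hd₂ hlt
    · have hlt2 : setLT S T := by
        rcases Q_comparable hS hT hST with h | h
        · exact h
        · exact absurd (h d₂ (interior_subset hd₂) d₁ (interior_subset hd₁)) (by linarith)
      rw [hgS S hS d₁ hd₁, hgS T hT d₂ hd₂]
      exact hmono S hS T hT hlt2 _ (interior_subset ((key S hS).1 d₁ hd₁)) _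
        (interior_subset ((key T hT).1 d₂ hd₂))
  have himg : g '' D = E := by
    apply le_antisymm
    · rintro - ⟨d, hd, rfl⟩
      obtain ⟨S, hS, hdS⟩ := mem_iUnion₂.1 hd
      rw [hgS S hS d hdS]
      exact mem_iUnion₂.2 ⟨ε S, hQ S hS, (key S hS).1 d hdS⟩
    · intro y hy
      obtain ⟨T, hT, hyT⟩ := mem_iUnion₂.1 hy
      obtain ⟨S, hS, rfl⟩ := hsurj T hT
      obtain ⟨x, hx1, hx2⟩ := (key S hS).2.2 y hyT
      exact ⟨x, mem_iUnion₂.2 ⟨S, hS, hx1⟩, by rw [hgS S hS x hx1]; exact hx2⟩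
  obtain ⟨Φ, hΦ⟩ := ext_orderIso hDdense hEdense hmonoD himg
  -- image of a gap
  have himgGap : ∀ S ∈ gapsOf X, Φ '' S = ε S := by
    intro S hS
    have hSo : IsOpen S := gap_isOpen hX.2.1 hS
    have hTo : IsOpen (ε S) := gap_isOpen hY.2.1 (hgap S hS)
    have hiS : interior S = S := hSo.interior_eq
    have hiT : interior (ε S) = ε S := hTo.interior_eq
    apply le_antisymm
    · rintro - ⟨x, hx, rfl⟩
      have hxi : x ∈ interior S := by rw [hiS]; exact hx
      have hxD : x ∈ D := mem_iUnion₂.2 ⟨S, Or.inl hS, hxi⟩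
      rw [hΦ x hxD, hgS S (Or.inl hS) x hxi]
      exact interior_subset ((key S (Or.inl hS)).1 x hxi)
    · intro y hy
      have hyi : y ∈ interior (ε S) := by rw [hiT]; exact hy
      obtain ⟨x, hx1, hx2⟩ := (key S (Or.inl hS)).2.2 y hyi
      refine ⟨x, interior_subset hx1, ?_⟩
      rw [hΦ x (mem_iUnion₂.2 ⟨S, Or.inl hS, hx1⟩), hgS S (Or.inl hS) x hx1]
      exact hx2
  have himgCompl : Φ '' Xᶜ = Yᶜ := by
    rw [← compl_gaps X, ← compl_gaps Y, sUnion_eq_biUnion, sUnion_eq_biUnion, image_iUnion₂]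
    apply le_antisymm
    · refine iUnion₂_subset fun S hS => ?_
      rw [himgGap S hS]
      exact subset_iUnion₂ (s := fun T _ => T) (ε S) (hgap S hS)
    · refine iUnion₂_subset fun T hT => ?_
      obtain ⟨S, hS, rfl⟩ := hsurj T (Or.inl hT)
      have hSg : S ∈ gapsOf X := by
        rcases hS with h | h
        · exact h
        · exact absurd hT (fun hc => not_mem_both hc (hint S h))
      rw [← himgGap S hSg]
      exact subset_iUnion₂ (s := fun S' (_ : S' ∈ gapsOf X) => Φ '' S') S hSg
  refine ⟨Φ, ?_⟩
  have h2 : Φ '' Xᶜ = (Φ '' X)ᶜ := Set.image_compl_eq Φ.toEquiv.bijective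
  rw [h2] at himgCompl
  exact compl_injective himgCompl

/-! ### Colored back-and-forth -/

section BF

variable {α β : Type*} [LinearOrder α] [LinearOrder β]

/-- Colored partial isomorphisms containing the seed pairs. -/
def PIso (p : α → Prop) (q : β → Prop) (bα tα : α) (bβ tβ : β) : Type _ :=
  {f : Finset (α × β) // (bα, bβ) ∈ f ∧ (tα, tβ) ∈ f ∧
    (∀ pa ∈ f, ∀ pb ∈ f, cmp pa.1 pb.1 = cmp pa.2 pb.2) ∧
    (∀ pa ∈ f, (p pa.1 ↔ q pa.2))}

instance {p : α → Prop} {q : β → Prop} {bα tα : α} {bβ tβ : β} :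
    Preorder (PIso p q bα tα bβ tβ) :=
  Subtype.preorder _

variable {p : α → Prop} {q : β → Prop} {bα tα : α} {bβ tβ : β}

theorem bf_exists_across
    (hbα : ∀ a, bα ≤ a) (htα : ∀ a, a ≤ tα)
    (hdβ : ∀ x y : β, x < y → ∃ z, x < z ∧ z < y ∧ q z)
    (hfβ : (∀ a, p a) ∨ (∀ x y : β, x < y → ∃ z, x < z ∧ z < y ∧ ¬ q z))
    (f : PIso p q bα tα bβ tβ) (a : α) :
    ∃ b : β, (∀ pa ∈ f.1, cmp pa.1 a = cmp pa.2 b) ∧ (p a ↔ q b) := by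
  classical
  by_cases hmem : ∃ b, (a, b) ∈ f.1
  · obtain ⟨b, hb⟩ := hmem
    exact ⟨b, fun pa hpa => f.2.2.2.1 pa hpa (a, b) hb, f.2.2.2.2 (a, b) hb⟩
  · have hane : a ≠ bα := fun h => hmem ⟨bβ, h ▸ f.2.1⟩
    have hane' : a ≠ tα := fun h => hmem ⟨tβ, h ▸ f.2.2.1⟩
    have hba : bα < a := lt_of_le_of_ne (hbα a) (Ne.symm hane)
    have hat : a < tα := lt_of_le_of_ne (htα a) hane'
    set lo := (f.1.filter (fun pa : α × β => pa.1 < a)).image Prod.snd with hlo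
    set hi := (f.1.filter (fun pa : α × β => a < pa.1)).image Prod.snd with hhi
    have hlone : lo.Nonempty :=
      ⟨bβ, Finset.mem_image.2 ⟨(bα, bβ), Finset.mem_filter.2 ⟨f.2.1, hba⟩, rfl⟩⟩
    have hhine : hi.Nonempty :=
      ⟨tβ, Finset.mem_image.2 ⟨(tα, tβ), Finset.mem_filter.2 ⟨f.2.2.1, hat⟩, rfl⟩⟩
    have hbound : ∀ x ∈ lo, ∀ y ∈ hi, x < y := by
      intro x hx y hy
      obtain ⟨pa, hpa, rfl⟩ := Finset.mem_image.1 hx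
      obtain ⟨pb, hpb, rfl⟩ := Finset.mem_image.1 hy
      rw [Finset.mem_filter] at hpa hpb
      have := f.2.2.2.1 pa hpa.1 pb hpb.1
      rw [← lt_iff_lt_of_cmp_eq_cmp this]
      exact hpa.2.trans hpb.2
    have hmm : lo.max' hlone < hi.min' hhine :=
      hbound _ (lo.max'_mem hlone) _ (hi.min'_mem hhine)
    have hzex : ∃ z, lo.max' hlone < z ∧ z < hi.min' hhine ∧ (p a ↔ q z) := by
      by_cases hpa : p a
      · obtain ⟨z, h1, h2, h3⟩ := hdβ _ _ hmm
        exact ⟨z, h1, h2, by tauto⟩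
      · rcases hfβ with hall | hdense
        · exact absurd (hall a) hpa
        · obtain ⟨z, h1, h2, h3⟩ := hdense _ _ hmm
          exact ⟨z, h1, h2, by tauto⟩
    obtain ⟨z, hz1, hz2, hz3⟩ := hzex
    refine ⟨z, fun pa hpa => ?_, hz3⟩
    rcases lt_trichotomy pa.1 a with h | h | h
    · have h2 : pa.2 < z :=
        lt_of_le_of_lt (Finset.le_max' lo pa.2
          (Finset.mem_image.2 ⟨pa, Finset.mem_filter.2 ⟨hpa, h⟩, rfl⟩)) hz1
      rw [(cmp_eq_lt_iff _ _).2 h, eq_comm, cmp_eq_lt_iff]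
      exact h2
    · exact absurd ⟨pa.2, by rw [← h]; exact hpa⟩ hmem
    · have h2 : z < pa.2 :=
        lt_of_lt_of_le hz2 (Finset.min'_le hi pa.2
          (Finset.mem_image.2 ⟨pa, Finset.mem_filter.2 ⟨hpa, h⟩, rfl⟩))
      rw [(cmp_eq_gt_iff _ _).2 h, eq_comm, cmp_eq_gt_iff]
      exact h2

theorem bf_exists_across'
    (hbβ : ∀ b, bβ ≤ b) (htβ : ∀ b, b ≤ tβ)
    (hdα : ∀ x y : α, x < y → ∃ z, x < z ∧ z < y ∧ p z)
    (hfα : (∀ b, q b) ∨ (∀ x y : α, x < y → ∃ z, x < z ∧ z < y ∧ ¬ p z))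
    (f : PIso p q bα tα bβ tβ) (b : β) :
    ∃ a : α, (∀ pa ∈ f.1, cmp pa.2 b = cmp pa.1 a) ∧ (p a ↔ q b) := by
  classical
  by_cases hmem : ∃ a, (a, b) ∈ f.1
  · obtain ⟨a, ha⟩ := hmem
    exact ⟨a, fun pa hpa => (f.2.2.2.1 pa hpa (a, b) ha).symm, f.2.2.2.2 (a, b) ha⟩
  · have hbne : b ≠ bβ := by
      intro h
      have : cmp bα bα = cmp bβ bβ := f.2.2.2.1 _ f.2.1 _ f.2.1
      exact hmem ⟨bα, h ▸ f.2.1⟩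
    have hbne' : b ≠ tβ := fun h => hmem ⟨tα, h ▸ f.2.2.1⟩
    have hbb : bβ < b := lt_of_le_of_ne (hbβ b) (Ne.symm hbne)
    have hbt : b < tβ := lt_of_le_of_ne (htβ b) hbne'
    set lo := (f.1.filter (fun pa : α × β => pa.2 < b)).image Prod.fst with hlo
    set hi := (f.1.filter (fun pa : α × β => b < pa.2)).image Prod.fst with hhi
    have hlone : lo.Nonempty :=
      ⟨bα, Finset.mem_image.2 ⟨(bα, bβ), Finset.mem_filter.2 ⟨f.2.1, hbb⟩, rfl⟩⟩
    have hhine : hi.Nonempty :=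
      ⟨tα, Finset.mem_image.2 ⟨(tα, tβ), Finset.mem_filter.2 ⟨f.2.2.1, hbt⟩, rfl⟩⟩
    have hbound : ∀ x ∈ lo, ∀ y ∈ hi, x < y := by
      intro x hx y hy
      obtain ⟨pa, hpa, rfl⟩ := Finset.mem_image.1 hx
      obtain ⟨pb, hpb, rfl⟩ := Finset.mem_image.1 hy
      rw [Finset.mem_filter] at hpa hpb
      have := f.2.2.2.1 pa hpa.1 pb hpb.1
      rw [lt_iff_lt_of_cmp_eq_cmp this]
      exact hpa.2.trans hpb.2
    have hmm : lo.max' hlone < hi.min' hhine :=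
      hbound _ (lo.max'_mem hlone) _ (hi.min'_mem hhine)
    have hzex : ∃ z, lo.max' hlone < z ∧ z < hi.min' hhine ∧ (p z ↔ q b) := by
      by_cases hqb : q b
      · obtain ⟨z, h1, h2, h3⟩ := hdα _ _ hmm
        exact ⟨z, h1, h2, by tauto⟩
      · rcases hfα with hall | hdense
        · exact absurd (hall b) hqb
        · obtain ⟨z, h1, h2, h3⟩ := hdense _ _ hmm
          exact ⟨z, h1, h2, by tauto⟩
    obtain ⟨z, hz1, hz2, hz3⟩ := hzex
    refine ⟨z, fun pa hpa => ?_, hz3⟩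
    rcases lt_trichotomy pa.2 b with h | h | h
    · have h2 : pa.1 < z :=
        lt_of_le_of_lt (Finset.le_max' lo pa.1
          (Finset.mem_image.2 ⟨pa, Finset.mem_filter.2 ⟨hpa, h⟩, rfl⟩)) hz1
      rw [(cmp_eq_lt_iff _ _).2 h, eq_comm, cmp_eq_lt_iff]
      exact h2
    · exact absurd ⟨pa.1, by rw [← h]; exact hpa⟩ hmem
    · have h2 : z < pa.1 :=
        lt_of_lt_of_le hz2 (Finset.min'_le hi pa.1
          (Finset.mem_image.2 ⟨pa, Finset.mem_filter.2 ⟨hpa, h⟩, rfl⟩))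
      rw [(cmp_eq_gt_iff _ _).2 h, eq_comm, cmp_eq_gt_iff]
      exact h2

theorem bf {α β : Type*} [LinearOrder α] [LinearOrder β] [Countable α] [Countable β]
    (p : α → Prop) (q : β → Prop) (bα tα : α) (bβ tβ : β)
    (hbα : ∀ a, bα ≤ a) (htα : ∀ a, a ≤ tα) (hbβ : ∀ b, bβ ≤ b) (htβ : ∀ b, b ≤ tβ)
    (hbtα : bα < tα) (hbtβ : bβ < tβ)
    (hpb : p bα) (hpt : p tα) (hqb : q bβ) (hqt : q tβ)
    (hdα : ∀ x y : α, x < y → ∃ z, x < z ∧ z < y ∧ p z)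
    (hdβ : ∀ x y : β, x < y → ∃ z, x < z ∧ z < y ∧ q z)
    (hfalse : ((∀ x y : α, x < y → ∃ z, x < z ∧ z < y ∧ ¬ p z) ∧
        (∀ x y : β, x < y → ∃ z, x < z ∧ z < y ∧ ¬ q z)) ∨ ((∀ a, p a) ∧ (∀ b, q b))) :
    ∃ e : α ≃o β, ∀ a, (p a ↔ q (e a)) := by
  classical
  cases nonempty_encodable α
  cases nonempty_encodable β
  have hfβ : (∀ a, p a) ∨ (∀ x y : β, x < y → ∃ z, x < z ∧ z < y ∧ ¬ q z) := by
    rcases hfalse with ⟨h1, h2⟩ | ⟨h1, h2⟩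
    · exact Or.inr h2
    · exact Or.inl h1
  have hfα : (∀ b, q b) ∨ (∀ x y : α, x < y → ∃ z, x < z ∧ z < y ∧ ¬ p z) := by
    rcases hfalse with ⟨h1, h2⟩ | ⟨h1, h2⟩
    · exact Or.inr h1
    · exact Or.inl h2
  -- seed
  have hσ0 : ((({(bα, bβ), (tα, tβ)} : Finset (α × β))) : Finset (α × β)).Nonempty := by simp
  have hseed : (bα, bβ) ∈ ({(bα, bβ), (tα, tβ)} : Finset (α × β)) ∧
      (tα, tβ) ∈ ({(bα, bβ), (tα, tβ)} : Finset (α × β)) ∧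
      (∀ pa ∈ ({(bα, bβ), (tα, tβ)} : Finset (α × β)),
        ∀ pb ∈ ({(bα, bβ), (tα, tβ)} : Finset (α × β)), cmp pa.1 pb.1 = cmp pa.2 pb.2) ∧
      (∀ pa ∈ ({(bα, bβ), (tα, tβ)} : Finset (α × β)), (p pa.1 ↔ q pa.2)) := by
    refine ⟨by simp, by simp, ?_, ?_⟩
    · intro pa hpa pb hpb
      simp only [Finset.mem_insert, Finset.mem_singleton] at hpa hpb
      rcases hpa with rfl | rfl <;> rcases hpb with rfl | rfl <;>
        simp_all [cmp_self_eq_eq, (cmp_eq_lt_iff _ _).2, (cmp_eq_gt_iff _ _).2, hbtα, hbtβ]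
    · intro pa hpa
      simp only [Finset.mem_insert, Finset.mem_singleton] at hpa
      rcases hpa with rfl | rfl <;> simp_all
  let σ0 : PIso p q bα tα bβ tβ := ⟨{(bα, bβ), (tα, tβ)}, hseed⟩
  -- cofinal families
  let defL : α → Order.Cofinal (PIso p q bα tα bβ tβ) := fun a =>
    { carrier := {f | ∃ b, (a, b) ∈ f.1}
      isCofinal := by
        intro f
        obtain ⟨b, hb1, hb2⟩ := bf_exists_across hbα htα hdβ hfβ f a
        refine ⟨⟨insert (a, b) f.1, Finset.mem_insert_of_mem f.2.1,
          Finset.mem_insert_of_mem f.2.2.1, ?_, ?_⟩, ⟨b, Finset.mem_insert_self _ _⟩,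
          Finset.subset_insert _ _⟩
        · intro pa hpa pb hpb
          rw [Finset.mem_insert] at hpa hpb
          rcases hpa with rfl | hpa <;> rcases hpb with rfl | hpb
          · simp [cmp_self_eq_eq]
          · rw [cmp_eq_cmp_symm]; exact hb1 _ hpb
          · exact hb1 _ hpa
          · exact f.2.2.2.1 _ hpa _ hpb
        · intro pa hpa
          rw [Finset.mem_insert] at hpa
          rcases hpa with rfl | hpa
          · exact hb2
          · exact f.2.2.2.2 _ hpa }
  let defR : β → Order.Cofinal (PIso p q bα tα bβ tβ) := fun b =>
    { carrier := {f | ∃ a, (a, b) ∈ f.1}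
      isCofinal := by
        intro f
        obtain ⟨a, ha1, ha2⟩ := bf_exists_across' hbβ htβ hdα hfα f b
        refine ⟨⟨insert (a, b) f.1, Finset.mem_insert_of_mem f.2.1,
          Finset.mem_insert_of_mem f.2.2.1, ?_, ?_⟩, ⟨a, Finset.mem_insert_self _ _⟩,
          Finset.subset_insert _ _⟩
        · intro pa hpa pb hpb
          rw [Finset.mem_insert] at hpa hpb
          rcases hpa with rfl | hpa <;> rcases hpb with rfl | hpb
          · simp [cmp_self_eq_eq]
          · rw [cmp_eq_cmp_symm]; exact (ha1 _ hpb).symm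
          · exact (ha1 _ hpa).symm
          · exact f.2.2.2.1 _ hpa _ hpb
        · intro pa hpa
          rw [Finset.mem_insert] at hpa
          rcases hpa with rfl | hpa
          · exact ha2
          · exact f.2.2.2.2 _ hpa }
  let to_cofinal : α ⊕ β → Order.Cofinal (PIso p q bα tα bβ tβ) := fun x =>
    Sum.recOn x defL defR
  let our_ideal : Order.Ideal (PIso p q bα tα bβ tβ) := Order.idealOfCofinals σ0 to_cofinal
  have hF : ∀ a : α, ∃ b, ∃ f ∈ our_ideal, (a, b) ∈ f.1 := by
    intro a
    obtain ⟨f, ⟨b, hb⟩, hf⟩ := Order.cofinal_meets_idealOfCofinals σ0 to_cofinal (Sum.inl a)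
    exact ⟨b, f, hf, hb⟩
  have hG : ∀ b : β, ∃ a, ∃ f ∈ our_ideal, (a, b) ∈ f.1 := by
    intro b
    obtain ⟨f, ⟨a, ha⟩, hf⟩ := Order.cofinal_meets_idealOfCofinals σ0 to_cofinal (Sum.inr b)
    exact ⟨a, f, hf, ha⟩
  choose F hFspec using hF
  choose G hGspec using hG
  have hcmp : ∀ (a : α) (b : β), cmp a (G b) = cmp (F a) b := by
    intro a b
    obtain ⟨f, hf, hfa⟩ := hFspec a
    obtain ⟨g, hg, hgb⟩ := hGspec b
    obtain ⟨m, _, fm, gm⟩ := our_ideal.directed _ hf _ hg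
    exact m.2.2.2.1 (a, F a) (fm hfa) (G b, b) (gm hgb)
  refine ⟨OrderIso.ofCmpEqCmp F G hcmp, fun a => ?_⟩
  obtain ⟨f, hf, hfa⟩ := hFspec a
  exact f.2.2.2.2 (a, F a) hfa

end BF

/-! ### Bridge: combinatorial hypotheses to order isomorphism of ℝ -/

structure QT (X : Set ℝ) : Type where
  val : Set ℝ
  mem : val ∈ QOf X

theorem QT.ext' {X : Set ℝ} {a b : QT X} (h : a.val = b.val) : a = b := by
  cases a; cases b; cases h; rfl

def qt_equiv (X : Set ℝ) : QT X ≃ {S : Set ℝ // S ∈ QOf X} where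
  toFun a := ⟨a.val, a.mem⟩
  invFun s := ⟨s.1, s.2⟩
  left_inv a := rfl
  right_inv s := rfl

theorem qt_countable {X : Set ℝ} (hX : IsClosed X) : Countable (QT X) := by
  haveI : Countable {S : Set ℝ // S ∈ QOf X} := (Q_countable hX).to_subtype
  exact Countable.of_equiv _ (qt_equiv X).symm

theorem main_combinatorial {X Y : Set ℝ} (hX : Pre X) (hY : Pre Y)
    (hdX : ∀ S ∈ QOf X, ∀ T ∈ QOf X, setLT S T → ∃ G ∈ gapsOf X, setLT S G ∧ setLT G T)
    (hdY : ∀ S ∈ QOf Y, ∀ T ∈ QOf Y, setLT S T → ∃ G ∈ gapsOf Y, setLT S G ∧ setLT G T)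
    (hIopt : ((∀ S ∈ QOf X, ∀ T ∈ QOf X, setLT S T →
          ∃ I ∈ intervalsOf X, setLT S I ∧ setLT I T) ∧
        (∀ S ∈ QOf Y, ∀ T ∈ QOf Y, setLT S T →
          ∃ I ∈ intervalsOf Y, setLT S I ∧ setLT I T)) ∨
      (intervalsOf X = ∅ ∧ intervalsOf Y = ∅)) :
    ∃ Φ : ℝ ≃o ℝ, Φ '' X = Y := by
  classical
  -- rational representatives
  obtain ⟨fX, hfX⟩ : ∃ f : QT X → ℚ, ∀ S, (f S : ℝ) ∈ S.1 := by
    have := fun S : QT X => Q_exists_rat hX.2.1 S.2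
    exact ⟨fun S => (this S).choose, fun S => (this S).choose_spec⟩
  obtain ⟨fY, hfY⟩ : ∃ f : QT Y → ℚ, ∀ S, (f S : ℝ) ∈ S.1 := by
    have := fun S : QT Y => Q_exists_rat hY.2.1 S.2
    exact ⟨fun S => (this S).choose, fun S => (this S).choose_spec⟩
  have hfXinj : Function.Injective fX := by
    intro S T h
    apply QT.ext'
    by_contra hne
    exact Set.disjoint_left.1 (Q_disjoint S.2 T.2 hne) (hfX S) (by rw [h]; exact hfX T)
  have hfYinj : Function.Injective fY := by
    intro S T h
    apply QT.ext'
    by_contra hne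
    exact Set.disjoint_left.1 (Q_disjoint S.2 T.2 hne) (hfY S) (by rw [h]; exact hfY T)
  letI : LinearOrder (QT X) := LinearOrder.lift' fX hfXinj
  letI : LinearOrder (QT Y) := LinearOrder.lift' fY hfYinj
  haveI : Countable (QT X) := qt_countable hX.2.1
  haveI : Countable (QT Y) := qt_countable hY.2.1
  have hleX : ∀ a b : QT X, a ≤ b ↔ fX a ≤ fX b := fun a b => Iff.rfl
  have hltX : ∀ a b : QT X, a < b ↔ fX a < fX b := by
    intro a b
    rw [lt_iff_le_not_ge, lt_iff_le_not_ge, hleX, hleX]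
  have hleY : ∀ a b : QT Y, a ≤ b ↔ fY a ≤ fY b := fun a b => Iff.rfl
  have hltY : ∀ a b : QT Y, a < b ↔ fY a < fY b := by
    intro a b
    rw [lt_iff_le_not_ge, lt_iff_le_not_ge, hleY, hleY]
  -- setLT vs the lifted order
  have hsetX : ∀ a b : QT X, setLT a.1 b.1 → a < b := by
    intro a b h
    rw [hltX]
    exact_mod_cast h _ (hfX a) _ (hfX b)
  have hsetX' : ∀ a b : QT X, a < b → setLT a.1 b.1 := by
    intro a b h
    have hne : a.1 ≠ b.1 := by
      intro hc
      have : a = b := QT.ext' hc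
      exact absurd (this ▸ h) (lt_irrefl _)
    rcases Q_comparable a.2 b.2 hne with h2 | h2
    · exact h2
    · exact absurd (hsetX b a h2) (by intro hc; exact absurd (h.trans hc) (lt_irrefl _))
  have hsetY : ∀ a b : QT Y, setLT a.1 b.1 → a < b := by
    intro a b h
    rw [hltY]
    exact_mod_cast h _ (hfY a) _ (hfY b)
  have hsetY' : ∀ a b : QT Y, a < b → setLT a.1 b.1 := by
    intro a b h
    have hne : a.1 ≠ b.1 := by
      intro hc
      have : a = b := QT.ext' hc
      exact absurd (this ▸ h) (lt_irrefl _)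
    rcases Q_comparable a.2 b.2 hne with h2 | h2
    · exact h2
    · exact absurd (hsetY b a h2) (by intro hc; exact absurd (h.trans hc) (lt_irrefl _))
  -- seeds
  set bA : QT X := ⟨Iio (sInf X), Or.inl (botQ_mem hX)⟩ with hbA
  set tA : QT X := ⟨Ioi (sSup X), Or.inl (topQ_mem hX)⟩ with htA
  set bB : QT Y := ⟨Iio (sInf Y), Or.inl (botQ_mem hY)⟩ with hbB
  set tB : QT Y := ⟨Ioi (sSup Y), Or.inl (topQ_mem hY)⟩ with htB
  have hbAle : ∀ a, bA ≤ a := by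
    intro a
    by_cases h : a.1 = Iio (sInf X)
    · exact le_of_eq (QT.ext' h.symm)
    · exact le_of_lt (hsetX bA a (botQ_least hX a.2 h))
  have htAle : ∀ a, a ≤ tA := by
    intro a
    by_cases h : a.1 = Ioi (sSup X)
    · exact le_of_eq (QT.ext' h)
    · exact le_of_lt (hsetX a tA (topQ_greatest hX a.2 h))
  have hbBle : ∀ a, bB ≤ a := by
    intro a
    by_cases h : a.1 = Iio (sInf Y)
    · exact le_of_eq (QT.ext' h.symm)
    · exact le_of_lt (hsetY bB a (botQ_least hY a.2 h))
  have htBle : ∀ a, a ≤ tB := by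
    intro a
    by_cases h : a.1 = Ioi (sSup Y)
    · exact le_of_eq (QT.ext' h)
    · exact le_of_lt (hsetY a tB (topQ_greatest hY a.2 h))
  have hbtA : bA < tA :=
    hsetX bA tA (botQ_least hX tA.2 (Ne.symm (botQ_ne_topQ hX)))
  have hbtB : bB < tB :=
    hsetY bB tB (botQ_least hY tB.2 (Ne.symm (botQ_ne_topQ hY)))
  -- densities
  have hdA : ∀ x y : QT X, x < y → ∃ z, x < z ∧ z < y ∧ z.1 ∈ gapsOf X := by
    intro x y h
    obtain ⟨G, hG, h1, h2⟩ := hdX _ x.2 _ y.2 (hsetX' x y h)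
    exact ⟨⟨G, Or.inl hG⟩, hsetX _ _ h1, hsetX _ _ h2, hG⟩
  have hdB : ∀ x y : QT Y, x < y → ∃ z, x < z ∧ z < y ∧ z.1 ∈ gapsOf Y := by
    intro x y h
    obtain ⟨G, hG, h1, h2⟩ := hdY _ x.2 _ y.2 (hsetY' x y h)
    exact ⟨⟨G, Or.inl hG⟩, hsetY _ _ h1, hsetY _ _ h2, hG⟩
  have hfalse : ((∀ x y : QT X, x < y →
        ∃ z, x < z ∧ z < y ∧ ¬ z.1 ∈ gapsOf X) ∧
      (∀ x y : QT Y, x < y → ∃ z, x < z ∧ z < y ∧ ¬ z.1 ∈ gapsOf Y)) ∨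
      ((∀ a : QT X, a.1 ∈ gapsOf X) ∧
        (∀ b : QT Y, b.1 ∈ gapsOf Y)) := by
    rcases hIopt with ⟨h1, h2⟩ | ⟨h1, h2⟩
    · left
      constructor
      · intro x y h
        obtain ⟨I, hI, ha, hb⟩ := h1 _ x.2 _ y.2 (hsetX' x y h)
        exact ⟨⟨I, Or.inr hI⟩, hsetX _ _ ha, hsetX _ _ hb, fun hc => not_mem_both hc hI⟩
      · intro x y h
        obtain ⟨I, hI, ha, hb⟩ := h2 _ x.2 _ y.2 (hsetY' x y h)
        exact ⟨⟨I, Or.inr hI⟩, hsetY _ _ ha, hsetY _ _ hb, fun hc => not_mem_both hc hI⟩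
    · right
      constructor
      · intro a
        rcases a.2 with h | h
        · exact h
        · exact absurd h (by rw [h1]; exact notMem_empty _)
      · intro b
        rcases b.2 with h | h
        · exact h
        · exact absurd h (by rw [h2]; exact notMem_empty _)
  obtain ⟨e, he⟩ := bf (fun S : QT X => S.1 ∈ gapsOf X)
    (fun T : QT Y => T.1 ∈ gapsOf Y) bA tA bB tB
    hbAle htAle hbBle htBle hbtA hbtB
    (botQ_mem hX) (topQ_mem hX) (botQ_mem hY) (topQ_mem hY) hdA hdB hfalse
  -- build ε and apply the engine
  set ε : Set ℝ → Set ℝ := fun S => if h : S ∈ QOf X then (e ⟨S, h⟩).1 else ∅ with hε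
  have hεeq : ∀ S (h : S ∈ QOf X), ε S = (e ⟨S, h⟩).1 := by
    intro S h
    rw [hε]
    simp [h]
  have hQ : ∀ S ∈ QOf X, ε S ∈ QOf Y := by
    intro S h
    rw [hεeq S h]
    exact (e ⟨S, h⟩).2
  have hgap : ∀ S ∈ gapsOf X, ε S ∈ gapsOf Y := by
    intro S h
    rw [hεeq S (Or.inl h)]
    exact (he ⟨S, Or.inl h⟩).1 h
  have hint : ∀ S ∈ intervalsOf X, ε S ∈ intervalsOf Y := by
    intro S h
    rw [hεeq S (Or.inr h)]
    rcases (e ⟨S, Or.inr h⟩).2 with h2 | h2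
    · exact absurd ((he ⟨S, Or.inr h⟩).2 h2) (fun hc => not_mem_both hc h)
    · exact h2
  have hmono : ∀ S ∈ QOf X, ∀ T ∈ QOf X, setLT S T → setLT (ε S) (ε T) := by
    intro S hS T hT h
    rw [hεeq S hS, hεeq T hT]
    have h1 : (⟨S, hS⟩ : QT X) < ⟨T, hT⟩ := hsetX _ _ h
    have h2 : e ⟨S, hS⟩ < e ⟨T, hT⟩ := e.strictMono h1
    exact hsetY' _ _ h2
  have hsurj : ∀ T ∈ QOf Y, ∃ S ∈ QOf X, ε S = T := by
    intro T hT
    refine ⟨(e.symm ⟨T, hT⟩).1, (e.symm ⟨T, hT⟩).2, ?_⟩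
    rw [hεeq _ (e.symm ⟨T, hT⟩).2]
    have : (⟨(e.symm ⟨T, hT⟩).1, (e.symm ⟨T, hT⟩).2⟩ : QT X) = e.symm ⟨T, hT⟩ :=
      QT.ext' rfl
    rw [this, e.apply_symm_apply]
  exact engine hX hY ε hQ hgap hint hmono hsurj

/-! ### Density of gaps and intervals in the Q-structure -/

theorem setLT_bddAbove {S T : Set ℝ} (h : setLT S T) (hT : T.Nonempty) : BddAbove S := by
  obtain ⟨t, ht⟩ := hT
  exact ⟨t, fun s hs => le_of_lt (h s hs t ht)⟩

theorem setLT_bddBelow {S T : Set ℝ} (h : setLT S T) (hS : S.Nonempty) : BddBelow T := by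
  obtain ⟨s, hs⟩ := hS
  exact ⟨s, fun t ht => le_of_lt (h s hs t ht)⟩

theorem setLT_csSup_le_csInf {S T : Set ℝ} (h : setLT S T) (hS : S.Nonempty) (hT : T.Nonempty) :
    sSup S ≤ sInf T := by
  apply csSup_le hS
  intro s hs
  exact le_csInf hT fun t ht => le_of_lt (h s hs t ht)

theorem gap_sSup_mem {X S : Set ℝ} (hX : Pre X) (hS : S ∈ gapsOf X) (hb : BddAbove S) :
    sSup S ∈ X := by
  by_contra h
  have hne := gap_nonempty hS
  have hop := gap_isOpen hX.2.1 hS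
  have hG' : connectedComponentIn Xᶜ (sSup S) ∈ gapsOf X := ⟨_, h, rfl⟩
  obtain ⟨ε, hε, hball⟩ := Metric.isOpen_iff.1 (gap_isOpen hX.2.1 hG') _
    (mem_connectedComponentIn h)
  obtain ⟨s₀, hs₀, hs₀2⟩ := exists_lt_of_lt_csSup hne (show sSup S - ε < sSup S by linarith)
  have hs₀3 : s₀ < sSup S :=
    lt_of_le_of_ne (le_csSup hb hs₀) (fun hc => isOpen_csSup_not_mem hop hb (hc ▸ hs₀))
  have hs₀G : s₀ ∈ connectedComponentIn Xᶜ (sSup S) := by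
    apply hball
    rw [Metric.mem_ball, Real.dist_eq, abs_of_nonpos] <;> linarith
  have : connectedComponentIn Xᶜ (sSup S) = S :=
    (connectedComponentIn_eq hs₀G).trans (cc_eq_of_mem_gap hS hs₀)
  have h8 : sSup S ∈ connectedComponentIn Xᶜ (sSup S) := mem_connectedComponentIn h
  rw [this] at h8
  exact isOpen_csSup_not_mem hop hb h8

theorem gap_sInf_mem {X S : Set ℝ} (hX : Pre X) (hS : S ∈ gapsOf X) (hb : BddBelow S) :
    sInf S ∈ X := by
  by_contra h
  have hne := gap_nonempty hS
  have hop := gap_isOpen hX.2.1 hS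
  have hG' : connectedComponentIn Xᶜ (sInf S) ∈ gapsOf X := ⟨_, h, rfl⟩
  obtain ⟨ε, hε, hball⟩ := Metric.isOpen_iff.1 (gap_isOpen hX.2.1 hG') _
    (mem_connectedComponentIn h)
  obtain ⟨s₀, hs₀, hs₀2⟩ := exists_lt_of_csInf_lt hne (show sInf S < sInf S + ε by linarith)
  have hs₀3 : sInf S < s₀ :=
    lt_of_le_of_ne (csInf_le hb hs₀) (fun hc => isOpen_csInf_not_mem hop hb (hc.symm ▸ hs₀))
  have hs₀G : s₀ ∈ connectedComponentIn Xᶜ (sInf S) := by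
    apply hball
    rw [Metric.mem_ball, Real.dist_eq, abs_of_nonneg] <;> linarith
  have : connectedComponentIn Xᶜ (sInf S) = S :=
    (connectedComponentIn_eq hs₀G).trans (cc_eq_of_mem_gap hS hs₀)
  have h8 : sInf S ∈ connectedComponentIn Xᶜ (sInf S) := mem_connectedComponentIn h
  rw [this] at h8
  exact isOpen_csInf_not_mem hop hb h8

theorem Q_sSup_mem {X S : Set ℝ} (hX : Pre X) (hS : S ∈ QOf X) (hb : BddAbove S) :
    sSup S ∈ X := by
  rcases hS with hS | hS
  · exact gap_sSup_mem hX hS hb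
  · exact interval_subset hS
      ((interval_isClosed hX.2.1 hS).csSup_mem (interval_nonempty hS) (interval_bdd hX hS).2)

theorem Q_sInf_mem {X S : Set ℝ} (hX : Pre X) (hS : S ∈ QOf X) (hb : BddBelow S) :
    sInf S ∈ X := by
  rcases hS with hS | hS
  · exact gap_sInf_mem hX hS hb
  · exact interval_subset hS
      ((interval_isClosed hX.2.1 hS).csInf_mem (interval_nonempty hS) (interval_bdd hX hS).1)

/-- Just below the sup of an upper-bounded gap lies the gap. -/
theorem gap_left_approx {X S : Set ℝ} (hX : Pre X) (hS : S ∈ gapsOf X) (hb : BddAbove S) :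
    ∃ ε > 0, Ioo (sSup S - ε) (sSup S) ⊆ S := by
  by_cases hbb : BddBelow S
  · obtain ⟨h1, h2⟩ := gap_eq_Ioo hX hS hbb hb
    refine ⟨sSup S - sInf S, by linarith, fun z hz => ?_⟩
    rw [h1]
    exact ⟨by linarith [hz.1], hz.2⟩
  · have h1 := gap_eq_Iio hX hS hbb
    refine ⟨1, one_pos, fun z hz => ?_⟩
    rw [h1]
    have h2 : sSup S = sInf X := by rw [h1, csSup_Iio]
    rw [h1, csSup_Iio] at hz
    exact hz.2
/-- Just above the inf of a lower-bounded gap lies the gap. -/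
theorem gap_right_approx {X S : Set ℝ} (hX : Pre X) (hS : S ∈ gapsOf X) (hb : BddBelow S) :
    ∃ ε > 0, Ioo (sInf S) (sInf S + ε) ⊆ S := by
  by_cases hbb : BddAbove S
  · obtain ⟨h1, h2⟩ := gap_eq_Ioo hX hS hb hbb
    refine ⟨sSup S - sInf S, by linarith, fun z hz => ?_⟩
    rw [h1]
    exact ⟨hz.1, by linarith [hz.2]⟩
  · have h1 := gap_eq_Ioi hX hS hbb
    refine ⟨1, one_pos, fun z hz => ?_⟩
    rw [h1]
    rw [h1, csInf_Ioi] at hz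
    exact hz.1

/-- Packaging: a point of the complement strictly between two Q-elements produces
a gap strictly between them. -/
theorem sep_to_gap {X S T : Set ℝ} (hX : Pre X) (hS : S ∈ QOf X) (hT : T ∈ QOf X)
    (hST : setLT S T) (hu : sSup S ∈ X) (hv : sInf T ∈ X) {z : ℝ}
    (hz1 : z ∈ Ioo (sSup S) (sInf T)) (hz2 : z ∉ X) :
    ∃ G ∈ gapsOf X, setLT S G ∧ setLT G T ∧ G ⊆ Ioo (sSup S) (sInf T) := by
  have hSne := Q_nonempty hS
  have hTne := Q_nonempty hT
  have hbS : BddAbove S := setLT_bddAbove hST hTne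
  have hbT : BddBelow T := setLT_bddBelow hST hSne
  set G := connectedComponentIn Xᶜ z with hG
  have hGgap : G ∈ gapsOf X := ⟨z, hz2, rfl⟩
  have hzG : z ∈ G := mem_connectedComponentIn hz2
  have hGsub : G ⊆ Ioo (sSup S) (sInf T) := by
    intro g hg
    constructor
    · rcases lt_or_ge (sSup S) g with h | h
      · exact h
      · exfalso
        have : sSup S ∈ G := (Q_ordConnected (Or.inl hGgap)).out hg hzG ⟨h, le_of_lt hz1.1⟩
        exact (gap_subset hGgap this) hu
    · rcases lt_or_ge g (sInf T) with h | h
      · exact h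
      · exfalso
        have : sInf T ∈ G := (Q_ordConnected (Or.inl hGgap)).out hzG hg ⟨le_of_lt hz1.2, h⟩
        exact (gap_subset hGgap this) hv
  refine ⟨G, hGgap, ?_, ?_, hGsub⟩
  · intro s hs g hg
    exact lt_of_le_of_lt (le_csSup hbS hs) (hGsub hg).1
  · intro g hg t ht
    exact lt_of_lt_of_le (hGsub hg).2 (csInf_le hbT ht)

/-- If a punctured two-sided neighborhood of a point of `X` misses `X`, and `X` is
regularly closed, contradiction. -/
theorem isolated_contra {X : Set ℝ} (hreg : X ⊆ closure (⋃₀ intervalsOf X)) {w ε₀ ε₁ : ℝ}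
    (hw : w ∈ X) (h0 : 0 < ε₀) (h1 : 0 < ε₁)
    (hb : Ioo (w - ε₀) w ⊆ Xᶜ) (ha : Ioo w (w + ε₁) ⊆ Xᶜ) : False := by
  have hcl := hreg hw
  rw [Real.mem_closure_iff] at hcl
  obtain ⟨p, hp, hpw⟩ := hcl (min ε₀ ε₁) (lt_min h0 h1)
  obtain ⟨I, hI, hpI⟩ := hp
  have hIX : I ⊆ X := interval_subset hI
  rcases lt_trichotomy p w with h | h | h
  · refine (hb ⟨?_, h⟩) (hIX hpI)
    have := abs_lt.1 hpw
    have := min_le_left ε₀ ε₁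
    linarith [this]
  · subst h
    obtain ⟨z, hz, z', hz', hne⟩ := hI.2
    rcases lt_trichotomy z p with hc | hc | hc
    · set t := p - min (p - z) ε₀ / 2 with ht
      have htm : min (p - z) ε₀ > 0 := lt_min (by linarith) h0
      have htI : t ∈ I := (Q_ordConnected (Or.inr hI)).out hz hpI
        ⟨by rw [ht]; have := min_le_left (p - z) ε₀; linarith, by rw [ht]; linarith⟩
      refine hb ⟨?_, ?_⟩ (hIX htI) <;> rw [ht]
      · have := min_le_right (p - z) ε₀; linarith
      · linarith
    · rcases lt_trichotomy z' p with hc' | hc' | hc'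
      · set t := p - min (p - z') ε₀ / 2 with ht
        have htm : min (p - z') ε₀ > 0 := lt_min (by linarith) h0
        have htI : t ∈ I := (Q_ordConnected (Or.inr hI)).out hz' hpI
          ⟨by rw [ht]; have := min_le_left (p - z') ε₀; linarith, by rw [ht]; linarith⟩
        refine hb ⟨?_, ?_⟩ (hIX htI) <;> rw [ht]
        · have := min_le_right (p - z') ε₀; linarith
        · linarith
      · exact hne (hc.trans hc'.symm)
      · set t := p + min (z' - p) ε₁ / 2 with ht
        have htm : min (z' - p) ε₁ > 0 := lt_min (by linarith) h1
        have htI : t ∈ I := (Q_ordConnected (Or.inr hI)).out hpI hz'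
          ⟨by rw [ht]; linarith, by rw [ht]; have := min_le_left (z' - p) ε₁; linarith⟩
        refine ha ⟨?_, ?_⟩ (hIX htI) <;> rw [ht]
        · linarith
        · have := min_le_right (z' - p) ε₁; linarith
    · set t := p + min (z - p) ε₁ / 2 with ht
      have htm : min (z - p) ε₁ > 0 := lt_min (by linarith) h1
      have htI : t ∈ I := (Q_ordConnected (Or.inr hI)).out hpI hz
        ⟨by rw [ht]; linarith, by rw [ht]; have := min_le_left (z - p) ε₁; linarith⟩
      refine ha ⟨?_, ?_⟩ (hIX htI) <;> rw [ht]
      · linarith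
      · have := min_le_right (z - p) ε₁; linarith
  · refine (ha ⟨h, ?_⟩) (hIX hpI)
    have := abs_lt.1 hpw
    have := min_le_right ε₀ ε₁
    linarith [this]

/-! ### M-Cantorval structure theorems -/

theorem mc_pre {X : Set ℝ} (h : MCantorval X) : Pre X := ⟨h.1, h.2.2.1.1, h.2.1⟩

theorem trivO_mem {X : Set ℝ} {t : ℝ} (h : t ∈ trivCompOf X) :
    t ∈ X ∧ connectedComponentIn X t = {t} := ⟨h.1, h.2⟩

theorem mc_sep {X : Set ℝ} (hM : MCantorval X) {S T : Set ℝ} (hS : S ∈ QOf X)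
    (hT : T ∈ QOf X) (h : setLT S T) : sSup S < sInf T := by
  have hX := mc_pre hM
  have hSne := Q_nonempty hS
  have hTne := Q_nonempty hT
  have hbS : BddAbove S := setLT_bddAbove h hTne
  have hbT : BddBelow T := setLT_bddBelow h hSne
  rcases lt_or_eq_of_le (setLT_csSup_le_csInf h hSne hTne) with hlt | heq
  · exact hlt
  exfalso
  set w := sSup S with hw
  have hwX : w ∈ X := Q_sSup_mem hX hS hbS
  have hwT : sInf T = w := heq.symm
  rcases hS with hSg | hSi <;> rcases hT with hTg | hTi
  · -- gap, gap
    obtain ⟨ε₀, hε₀, h₀⟩ := gap_left_approx hX hSg hbS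
    obtain ⟨ε₁, hε₁, h₁⟩ := gap_right_approx hX hTg hbT
    refine isolated_contra hM.2.2.1.2 hwX hε₀ hε₁ (fun z hz => gap_subset hSg (h₀ hz)) ?_
    intro z hz
    refine gap_subset hTg (h₁ ?_)
    rw [hwT]
    exact hz
  · -- gap, interval
    obtain ⟨ε₀, hε₀, h₀⟩ := gap_left_approx hX hSg hbS
    obtain ⟨hTIcc, hTlt⟩ := interval_eq_Icc hX hTi
    have hwmemT : w ∈ T := by
      rw [← hwT]
      exact (interval_isClosed hX.2.1 hTi).csInf_mem hTne hbT
    have hLeast : IsLeast T w := ⟨hwmemT, fun t ht => hwT ▸ csInf_le hbT ht⟩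
    have hcl := hM.2.2.2 T hTi w (Or.inl hLeast)
    rw [Real.mem_closure_iff] at hcl
    obtain ⟨t, ht, htd⟩ := hcl (min ε₀ (sSup T - w)) (lt_min hε₀ (by rw [← hwT]; linarith))
    have htX : t ∈ X := ht.1.1
    have htne : t ≠ w := ht.2
    rcases lt_or_gt_of_ne htne with hc | hc
    · refine gap_subset hSg (h₀ ⟨?_, hc⟩) htX
      have := abs_lt.1 htd
      have := min_le_left ε₀ (sSup T - w)
      linarith
    · have htT : t ∈ T := by
        rw [hTIcc]
        have := abs_lt.1 htd
        have := min_le_right ε₀ (sSup T - w)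
        constructor
        · rw [hwT]; linarith
        · linarith
      have h9 : connectedComponentIn X t = T := cc_eq_of_mem_interval hTi htT
      rw [ht.1.2] at h9
      rw [← h9] at hwmemT
      exact htne (mem_singleton_iff.1 hwmemT).symm
  · -- interval, gap
    obtain ⟨ε₁, hε₁, h₁⟩ := gap_right_approx hX hTg hbT
    obtain ⟨hSIcc, hSlt⟩ := interval_eq_Icc hX hSi
    have hwmemS : w ∈ S := (interval_isClosed hX.2.1 hSi).csSup_mem hSne hbS
    have hGreatest : IsGreatest S w := ⟨hwmemS, fun s hs => le_csSup hbS hs⟩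
    have hcl := hM.2.2.2 S hSi w (Or.inr hGreatest)
    rw [Real.mem_closure_iff] at hcl
    obtain ⟨t, ht, htd⟩ := hcl (min (w - sInf S) ε₁) (lt_min (by linarith) hε₁)
    have htX : t ∈ X := ht.1.1
    have htne : t ≠ w := ht.2
    rcases lt_or_gt_of_ne htne with hc | hc
    · have htS : t ∈ S := by
        rw [hSIcc]
        have := abs_lt.1 htd
        have := min_le_left (w - sInf S) ε₁
        constructor
        · linarith
        · rw [← hw]; linarith
      have h9 : connectedComponentIn X t = S := cc_eq_of_mem_interval hSi htS
      rw [ht.1.2] at h9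
      rw [← h9] at hwmemS
      exact htne (mem_singleton_iff.1 hwmemS).symm
    · refine gap_subset hTg (h₁ ⟨by rw [hwT]; exact hc, ?_⟩) htX
      have := abs_lt.1 htd
      have := min_le_right (w - sInf S) ε₁
      rw [hwT]
      linarith
  · -- interval, interval
    have hwmemS : w ∈ S := (interval_isClosed hX.2.1 hSi).csSup_mem hSne hbS
    have hwmemT : w ∈ T := by
      rw [← hwT]
      exact (interval_isClosed hX.2.1 hTi).csInf_mem hTne hbT
    by_cases hST : S = T
    · exact setLT_irrefl hSne (hST ▸ h)
    · exact Set.disjoint_left.1 (intervals_disjoint hSi hTi hST) hwmemS hwmemT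

theorem mc_gap_dense {X : Set ℝ} (hM : MCantorval X) {S T : Set ℝ} (hS : S ∈ QOf X)
    (hT : T ∈ QOf X) (h : setLT S T) :
    ∃ G ∈ gapsOf X, setLT S G ∧ setLT G T ∧ G ⊆ Ioo (sSup S) (sInf T) := by
  have hX := mc_pre hM
  have hSne := Q_nonempty hS
  have hTne := Q_nonempty hT
  have hbS : BddAbove S := setLT_bddAbove h hTne
  have hbT : BddBelow T := setLT_bddBelow h hSne
  set u := sSup S with hu
  set v := sInf T with hv
  have huv : u < v := mc_sep hM hS hT h
  have huX : u ∈ X := Q_sSup_mem hX hS hbS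
  have hvX : v ∈ X := Q_sInf_mem hX hT hbT
  by_cases hall : ∀ z ∈ Ioo u v, z ∈ X
  · exfalso
    have hIccX : Icc u v ⊆ X := by
      intro z hz
      rcases eq_or_lt_of_le hz.1 with rfl | h1
      · exact huX
      rcases eq_or_lt_of_le hz.2 with rfl | h2
      · exact hvX
      exact hall z ⟨h1, h2⟩
    have hIcc : Icc u v ⊆ connectedComponentIn X u :=
      isPreconnected_Icc.subset_connectedComponentIn ⟨le_refl u, le_of_lt huv⟩ hIccX
    rcases hS with hSg | hSi
    · -- S is а gap; left endpoint condition of the interval component at u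
      obtain ⟨ε₀, hε₀, h₀⟩ := gap_left_approx hX hSg hbS
      set I0 := connectedComponentIn X u with hI0
      have hI0i : I0 ∈ intervalsOf X :=
        ⟨⟨u, huX, rfl⟩, ⟨u, hIcc ⟨le_refl _, le_of_lt huv⟩, v,
          hIcc ⟨le_of_lt huv, le_refl _⟩, ne_of_lt huv⟩⟩
      have hI0X : I0 ⊆ X := connectedComponentIn_subset _ _
      have hLeast : IsLeast I0 u := by
        refine ⟨mem_connectedComponentIn huX, fun i hi => ?_⟩
        by_contra hc
        push_neg at hc
        set m := max i (u - ε₀) with hm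
        have hmu : m < u := max_lt hc (by linarith)
        set q := (m + u) / 2 with hq
        have hqI : q ∈ I0 := (Q_ordConnected (Or.inr hI0i)).out hi
          (mem_connectedComponentIn huX)
          ⟨by rw [hq]; have := le_max_left i (u - ε₀); linarith, by rw [hq]; linarith⟩
        refine gap_subset hSg (h₀ ⟨?_, ?_⟩) (hI0X hqI)
        · rw [hq]; have := le_max_right i (u - ε₀); linarith
        · rw [hq]; linarith
      have hcl := hM.2.2.2 I0 hI0i u (Or.inl hLeast)
      rw [Real.mem_closure_iff] at hcl
      obtain ⟨t, ht, htd⟩ := hcl (min ε₀ (v - u)) (lt_min hε₀ (by linarith))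
      have htX : t ∈ X := ht.1.1
      rcases lt_or_gt_of_ne ht.2 with hc | hc
      · refine gap_subset hSg (h₀ ⟨?_, hc⟩) htX
        have := abs_lt.1 htd
        have := min_le_left ε₀ (v - u)
        linarith
      · have htI : t ∈ I0 := by
          apply hIcc
          have := abs_lt.1 htd
          have := min_le_right ε₀ (v - u)
          constructor <;> linarith
        have : connectedComponentIn X t = I0 := cc_eq_of_mem_interval hI0i htI
        rw [ht.1.2] at this
        have hu : u ∈ ({t} : Set ℝ) := by
          rw [this]; exact mem_connectedComponentIn huX
        exact ht.2 (mem_singleton_iff.1 hu).symm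
    · -- S is an interval: contradiction with sSup
      have hu2 : u ∈ S := (interval_isClosed hX.2.1 hSi).csSup_mem hSne hbS
      have : connectedComponentIn X u = S := cc_eq_of_mem_interval hSi hu2
      have hvS : v ∈ S := by
        rw [← this]
        exact hIcc ⟨le_of_lt huv, le_refl _⟩
      have := le_csSup hbS hvS
      rw [← hu] at this
      linarith
  · push_neg at hall
    obtain ⟨z, hz1, hz2⟩ := hall
    obtain ⟨G, h1, h2, h3, h4⟩ := sep_to_gap hX hS hT h huX hvX hz1 hz2
    exact ⟨G, h1, h2, h3, h4⟩

theorem mc_int_dense {X : Set ℝ} (hM : MCantorval X) {S T : Set ℝ} (hS : S ∈ QOf X)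
    (hT : T ∈ QOf X) (h : setLT S T) :
    ∃ I ∈ intervalsOf X, setLT S I ∧ setLT I T := by
  have hX := mc_pre hM
  have hSne := Q_nonempty hS
  have hTne := Q_nonempty hT
  have hbS : BddAbove S := setLT_bddAbove h hTne
  have hbT : BddBelow T := setLT_bddBelow h hSne
  set u := sSup S with hu
  set v := sInf T with hv
  have huv : u < v := mc_sep hM hS hT h
  have huX : u ∈ X := Q_sSup_mem hX hS hbS
  have hvX : v ∈ X := Q_sInf_mem hX hT hbT
  obtain ⟨G, hGg, hSG, hGT, hGsub⟩ := mc_gap_dense hM hS hT h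
  have hGne := gap_nonempty hGg
  have hGbb : BddBelow G := ⟨u, fun g hg => le_of_lt (hGsub hg).1⟩
  have hGba : BddAbove G := ⟨v, fun g hg => le_of_lt (hGsub hg).2⟩
  obtain ⟨hGIoo, hg12⟩ := gap_eq_Ioo hX hGg hGbb hGba
  set g₁ := sInf G with hg₁
  set g₂ := sSup G with hg₂
  have hg₁X : g₁ ∈ X := gap_sInf_mem hX hGg hGbb
  have hg₂X : g₂ ∈ X := gap_sSup_mem hX hGg hGba
  have hug₁ : u ≤ g₁ := le_csInf hGne fun g hg => le_of_lt (hGsub hg).1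
  have hg₂v : g₂ ≤ v := csSup_le hGne fun g hg => le_of_lt (hGsub hg).2
  have hsu : ∀ s ∈ S, s ≤ u := fun s hs => le_csSup hbS hs
  have hvt : ∀ t ∈ T, v ≤ t := fun t ht => csInf_le hbT ht
  have hreg := hM.2.2.1.2
  by_cases hg2v : g₂ < v
  · -- approach g₂ from the right by interval points
    set δ := min (g₂ - g₁) (v - g₂) with hδ
    have hδpos : 0 < δ := lt_min (by linarith) (by linarith)
    have hcl := hreg hg₂X
    rw [Real.mem_closure_iff] at hcl
    obtain ⟨p, hp, hpd⟩ := hcl δ hδpos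
    obtain ⟨I, hIi, hpI⟩ := hp
    have hIX : I ⊆ X := interval_subset hIi
    have hpX : p ∈ X := hIX hpI
    have habs := abs_lt.1 hpd
    have hδ1 : δ ≤ g₂ - g₁ := min_le_left _ _
    have hδ2 : δ ≤ v - g₂ := min_le_right _ _
    have hpge : g₂ ≤ p := by
      by_contra hc
      push_neg at hc
      refine (gap_subset hGg ?_) hpX
      rw [hGIoo]
      exact ⟨by linarith, hc⟩
    have hplt : p < v := by linarith
    have hiLB : ∀ i ∈ I, g₁ < i := by
      intro i hi
      by_contra hc
      push_neg at hc
      have hmid : (g₁ + g₂) / 2 ∈ I := (Q_ordConnected (Or.inr hIi)).out hi hpI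
        ⟨by linarith, by linarith⟩
      refine (gap_subset hGg ?_) (hIX hmid)
      rw [hGIoo]
      constructor <;> [linarith; linarith]
    refine ⟨I, hIi, fun s hs i hi => ?_, fun i hi t ht => ?_⟩
    · exact lt_of_le_of_lt (le_trans (hsu s hs) hug₁) (hiLB i hi)
    · by_contra hc
      push_neg at hc
      have htI : t ∈ I := (Q_ordConnected (Or.inr hIi)).out hpI hi
        ⟨le_trans (le_of_lt hplt) (hvt t ht), hc⟩
      rcases hT with hTg | hTi
      · exact (gap_subset hTg ht) (hIX htI)
      · have hIT : I = T := by
          by_contra hne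
          exact Set.disjoint_left.1 (intervals_disjoint hIi hTi hne) htI ht
        rw [hIT] at hpI
        exact absurd (hvt p hpI) (not_le.2 hplt)
  · -- g₂ = v; approach g₁ from the left
    have hg₂v' : g₂ = v := le_antisymm hg₂v (not_lt.1 hg2v)
    -- first, u < g₁
    have hug₁' : u < g₁ := by
      rcases eq_or_lt_of_le hug₁ with heq | h'
      · exfalso
        have hGuv : G = Ioo u v := by rw [hGIoo, ← heq, hg₂v']
        rcases hS with hSg | hSi
        · obtain ⟨ε₀, hε₀, h₀⟩ := gap_left_approx hX hSg hbS
          refine isolated_contra hreg huX hε₀ (show (0:ℝ) < v - u by linarith) ?_ ?_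
          · exact fun z hz => gap_subset hSg (h₀ hz)
          · intro z hz
            refine gap_subset hGg ?_
            rw [hGuv]
            constructor
            · exact hz.1
            · have := hz.2; linarith
        · obtain ⟨hSIcc, hSlt⟩ := interval_eq_Icc hX hSi
          have humem : u ∈ S := (interval_isClosed hX.2.1 hSi).csSup_mem hSne hbS
          have hGreatest : IsGreatest S u := ⟨humem, fun s hs => le_csSup hbS hs⟩
          have hcl := hM.2.2.2 S hSi u (Or.inr hGreatest)
          rw [Real.mem_closure_iff] at hcl
          obtain ⟨t, ht, htd⟩ := hcl (min (u - sInf S) (v - u))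
            (lt_min (by linarith) (by linarith))
          have htX : t ∈ X := ht.1.1
          have habs := abs_lt.1 htd
          have hm1 := min_le_left (u - sInf S) (v - u)
          have hm2 := min_le_right (u - sInf S) (v - u)
          rcases lt_or_gt_of_ne ht.2 with hc | hc
          · have htS : t ∈ S := by
              rw [hSIcc]
              constructor <;> [linarith; linarith]
            have h9 : connectedComponentIn X t = S := cc_eq_of_mem_interval hSi htS
            rw [ht.1.2] at h9
            rw [← h9] at humem
            exact ht.2 (mem_singleton_iff.1 humem).symm
          · refine (gap_subset hGg ?_) htX
            rw [hGuv]
            constructor <;> [exact hc; linarith]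
      · exact h'
    set δ := min (g₂ - g₁) (g₁ - u) with hδ
    have hδpos : 0 < δ := lt_min (by linarith) (by linarith)
    have hcl := hreg hg₁X
    rw [Real.mem_closure_iff] at hcl
    obtain ⟨p, hp, hpd⟩ := hcl δ hδpos
    obtain ⟨I, hIi, hpI⟩ := hp
    have hIX : I ⊆ X := interval_subset hIi
    have hpX : p ∈ X := hIX hpI
    have habs := abs_lt.1 hpd
    have hδ1 : δ ≤ g₂ - g₁ := min_le_left _ _
    have hδ2 : δ ≤ g₁ - u := min_le_right _ _
    have hple : p ≤ g₁ := by
      by_contra hc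
      push_neg at hc
      refine (gap_subset hGg ?_) hpX
      rw [hGIoo]
      exact ⟨hc, by linarith⟩
    have hpgt : u < p := by linarith
    have hiUB : ∀ i ∈ I, i < g₂ := by
      intro i hi
      by_contra hc
      push_neg at hc
      have hmid : (g₁ + g₂) / 2 ∈ I := (Q_ordConnected (Or.inr hIi)).out hpI hi
        ⟨by linarith, by linarith⟩
      refine (gap_subset hGg ?_) (hIX hmid)
      rw [hGIoo]
      constructor <;> [linarith; linarith]
    refine ⟨I, hIi, fun s hs i hi => ?_, fun i hi t ht => ?_⟩
    · rcases hS with hSg | hSi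
      · -- S gap: s < u and u ≤ i
        have hsu' : s < u := by
          rcases eq_or_lt_of_le (hsu s hs) with heq | h'
          · exact absurd (heq ▸ huX) (gap_subset hSg hs)
          · exact h'
        have hui : u ≤ i := by
          by_contra hc
          push_neg at hc
          obtain ⟨ε₀, hε₀, h₀⟩ := gap_left_approx hX hSg hbS
          set m := max i (u - ε₀) with hm
          have hmu : m < u := max_lt hc (by linarith)
          set q := (m + u) / 2 with hq
          have hqI : q ∈ I := (Q_ordConnected (Or.inr hIi)).out hi hpI
            ⟨by rw [hq]; have := le_max_left i (u - ε₀); linarith,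
             by rw [hq]; linarith⟩
          refine gap_subset hSg (h₀ ⟨?_, ?_⟩) (hIX hqI)
          · rw [hq]; have := le_max_right i (u - ε₀); linarith
          · rw [hq]; linarith
        exact lt_of_lt_of_le hsu' hui
      · -- S interval: u ∈ S and u < i
        have humem : u ∈ S := (interval_isClosed hX.2.1 hSi).csSup_mem hSne hbS
        have hui : u < i := by
          by_contra hc
          push_neg at hc
          have huI : u ∈ I := (Q_ordConnected (Or.inr hIi)).out hi hpI
            ⟨hc, le_of_lt hpgt⟩
          have hIS : I = S := by
            by_contra hne
            exact Set.disjoint_left.1 (intervals_disjoint hIi hSi hne) huI humem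
          rw [hIS] at hpI
          exact absurd (hsu p hpI) (not_le.2 hpgt)
        exact lt_of_le_of_lt (hsu s hs) hui
    · calc i < g₂ := hiUB i hi
        _ = v := hg₂v'
        _ ≤ t := hvt t ht

/-! ### Cantor-like sets -/

def CantorLike (X : Set ℝ) : Prop :=
  Pre X ∧ (∀ x ∈ X, connectedComponentIn X x = {x}) ∧ (∀ x ∈ X, x ∈ closure (X \ {x}))

theorem cl_intervals_empty {X : Set ℝ} (hC : CantorLike X) : intervalsOf X = ∅ := by
  ext S
  simp only [mem_empty_iff_false, iff_false]
  rintro ⟨⟨x, hx, rfl⟩, hnt⟩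
  rw [hC.2.1 x hx] at hnt
  obtain ⟨a, ha, b, hb, hab⟩ := hnt
  rw [mem_singleton_iff] at ha hb
  exact hab (ha.trans hb.symm)

theorem cl_gap {X S : Set ℝ} (hC : CantorLike X) (hS : S ∈ QOf X) : S ∈ gapsOf X := by
  rcases hS with h | h
  · exact h
  · rw [cl_intervals_empty hC] at h
    exact absurd h (notMem_empty _)

theorem cl_sep {X : Set ℝ} (hC : CantorLike X) {S T : Set ℝ} (hS : S ∈ QOf X)
    (hT : T ∈ QOf X) (h : setLT S T) : sSup S < sInf T := by
  have hX := hC.1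
  have hSne := Q_nonempty hS
  have hTne := Q_nonempty hT
  have hbS : BddAbove S := setLT_bddAbove h hTne
  have hbT : BddBelow T := setLT_bddBelow h hSne
  rcases lt_or_eq_of_le (setLT_csSup_le_csInf h hSne hTne) with hlt | heq
  · exact hlt
  exfalso
  set w := sSup S with hw
  have hwX : w ∈ X := Q_sSup_mem hX hS hbS
  obtain ⟨ε₀, hε₀, h₀⟩ := gap_left_approx hX (cl_gap hC hS) hbS
  obtain ⟨ε₁, hε₁, h₁⟩ := gap_right_approx hX (cl_gap hC hT) hbT
  have hcl := hC.2.2 w hwX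
  rw [Real.mem_closure_iff] at hcl
  obtain ⟨t, ht, htd⟩ := hcl (min ε₀ ε₁) (lt_min hε₀ hε₁)
  have habs := abs_lt.1 htd
  have hm1 := min_le_left ε₀ ε₁
  have hm2 := min_le_right ε₀ ε₁
  rcases lt_or_gt_of_ne ht.2 with hc | hc
  · exact (gap_subset (cl_gap hC hS) (h₀ ⟨by linarith, hc⟩)) ht.1
  · refine (gap_subset (cl_gap hC hT) (h₁ ⟨?_, ?_⟩)) ht.1
    · rw [← heq]; exact hc
    · rw [← heq]; linarith

theorem cl_gap_dense {X : Set ℝ} (hC : CantorLike X) {S T : Set ℝ} (hS : S ∈ QOf X)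
    (hT : T ∈ QOf X) (h : setLT S T) :
    ∃ G ∈ gapsOf X, setLT S G ∧ setLT G T := by
  have hX := hC.1
  have hSne := Q_nonempty hS
  have hTne := Q_nonempty hT
  have hbS : BddAbove S := setLT_bddAbove h hTne
  have hbT : BddBelow T := setLT_bddBelow h hSne
  set u := sSup S with hu
  set v := sInf T with hv
  have huv : u < v := cl_sep hC hS hT h
  have huX : u ∈ X := Q_sSup_mem hX hS hbS
  have hvX : v ∈ X := Q_sInf_mem hX hT hbT
  by_cases hall : ∀ z ∈ Ioo u v, z ∈ X
  · exfalso
    have hIccX : Icc u v ⊆ X := by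
      intro z hz
      rcases eq_or_lt_of_le hz.1 with rfl | h1
      · exact huX
      rcases eq_or_lt_of_le hz.2 with rfl | h2
      · exact hvX
      exact hall z ⟨h1, h2⟩
    have hIcc : Icc u v ⊆ connectedComponentIn X u :=
      isPreconnected_Icc.subset_connectedComponentIn ⟨le_refl u, le_of_lt huv⟩ hIccX
    have := hIcc ⟨le_of_lt huv, le_refl v⟩
    rw [hC.2.1 u huX] at this
    rw [mem_singleton_iff] at this
    linarith [this ▸ huv]
  · push_neg at hall
    obtain ⟨z, hz1, hz2⟩ := hall
    obtain ⟨G, h1, h2, h3, -⟩ := sep_to_gap hX hS hT h huX hvX hz1 hz2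
    exact ⟨G, h1, h2, h3⟩

/-- Any two M-Cantorvals are related by an increasing homeomorphism of the line. -/
theorem mc_orderIso {X Y : Set ℝ} (hMX : MCantorval X) (hMY : MCantorval Y) :
    ∃ Φ : ℝ ≃o ℝ, Φ '' X = Y := by
  refine main_combinatorial (mc_pre hMX) (mc_pre hMY) ?_ ?_ (Or.inl ⟨?_, ?_⟩)
  · intro S hS T hT h
    obtain ⟨G, h1, h2, h3, -⟩ := mc_gap_dense hMX hS hT h
    exact ⟨G, h1, h2, h3⟩
  · intro S hS T hT h
    obtain ⟨G, h1, h2, h3, -⟩ := mc_gap_dense hMY hS hT h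
    exact ⟨G, h1, h2, h3⟩
  · exact fun S hS T hT h => mc_int_dense hMX hS hT h
  · exact fun S hS T hT h => mc_int_dense hMY hS hT h

/-- Any two Cantor-like sets are related by an increasing homeomorphism of the line. -/
theorem cl_orderIso {X Y : Set ℝ} (hCX : CantorLike X) (hCY : CantorLike Y) :
    ∃ Φ : ℝ ≃o ℝ, Φ '' X = Y :=
  main_combinatorial hCX.1 hCY.1 (fun S hS T hT h => cl_gap_dense hCX hS hT h)
    (fun S hS T hT h => cl_gap_dense hCY hS hT h)
    (Or.inr ⟨cl_intervals_empty hCX, cl_intervals_empty hCY⟩)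

/-! ### Copies of the Cantor space are Cantor-like -/

theorem cantor_preperfect (p : ℕ → Bool) : p ∈ closure {q : ℕ → Bool | q ≠ p} := by
  classical
  have htend : Filter.Tendsto (fun n => Function.update p n (!(p n))) Filter.atTop (nhds p) := by
    rw [tendsto_pi_nhds]
    intro i
    apply tendsto_atTop_of_eventually_const (i₀ := i + 1)
    intro n hn
    exact Function.update_of_ne (by omega : i ≠ n) _ _
  refine mem_closure_of_tendsto htend ?_
  filter_upwards with n
  intro hc
  have := congrFun hc n
  rw [Function.update_self] at this
  exact Bool.not_ne_self (p n) this

theorem cantorLike_of_homeo {X : Set ℝ} (e : ↥X ≃ₜ (ℕ → Bool)) : CantorLike X := by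
  haveI hcs : CompactSpace ↥X := e.symm.compactSpace
  have hcomp : IsCompact X := isCompact_iff_compactSpace.2 hcs
  haveI htd : TotallyDisconnectedSpace ↥X :=
    ⟨Topology.IsEmbedding.isTotallyDisconnected e.isEmbedding
      (isTotallyDisconnected_of_totallyDisconnectedSpace _)⟩
  have hne : X.Nonempty := ⟨(e.symm (fun _ => false)).1, (e.symm (fun _ => false)).2⟩
  refine ⟨⟨hne, hcomp.isClosed, hcomp.isBounded⟩, ?_, ?_⟩
  · intro x hx
    rw [connectedComponentIn_eq_image hx,
      (totallyDisconnectedSpace_iff_connectedComponent_singleton.1 htd ⟨x, hx⟩)]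
    exact image_singleton
  · intro x hx
    have h1 : e ⟨x, hx⟩ ∈ closure {q : ℕ → Bool | q ≠ e ⟨x, hx⟩} :=
      cantor_preperfect _
    have h2 : (⟨x, hx⟩ : ↥X) ∈ closure (e.symm '' {q : ℕ → Bool | q ≠ e ⟨x, hx⟩}) := by
      rw [← e.symm.image_closure]
      exact ⟨e ⟨x, hx⟩, h1, e.symm_apply_apply _⟩
    have h3 : e.symm '' {q : ℕ → Bool | q ≠ e ⟨x, hx⟩} = {y : ↥X | y ≠ ⟨x, hx⟩} := by
      ext y
      constructor
      · rintro ⟨q, hq, rfl⟩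
        intro hc
        exact hq (by rw [← hc, e.apply_symm_apply])
      · intro hy
        exact ⟨e y, fun hc => hy (by
          have := congrArg e.symm hc
          rwa [e.symm_apply_apply, e.symm_apply_apply] at this), e.symm_apply_apply _⟩
    rw [h3] at h2
    rw [closure_subtype] at h2
    have h4 : (Subtype.val '' {y : ↥X | y ≠ ⟨x, hx⟩}) = X \ {x} := by
      ext z
      constructor
      · rintro ⟨y, hy, rfl⟩
        exact ⟨y.2, fun hc => hy (Subtype.ext hc)⟩
      · rintro ⟨hz, hz2⟩
        exact ⟨⟨z, hz⟩, fun hc => hz2 (congrArg Subtype.val hc), rfl⟩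
    rwa [h4] at h2

/-! ### Topological invariance of the M-Cantorval property -/

theorem inj_image_nontrivial {α β : Type*} {f : α → β} (hf : Function.Injective f)
    {s : Set α} : (f '' s).Nontrivial ↔ s.Nontrivial := by
  constructor
  · rintro ⟨-, ⟨a, ha, rfl⟩, -, ⟨b, hb, rfl⟩, hab⟩
    exact ⟨a, ha, b, hb, fun hc => hab (congrArg f hc)⟩
  · rintro ⟨a, ha, b, hb, hab⟩
    exact ⟨f a, ⟨a, ha, rfl⟩, f b, ⟨b, hb, rfl⟩, fun hc => hab (hf hc)⟩

theorem homeo_connectedComponent {A B : Type*} [TopologicalSpace A] [TopologicalSpace B]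
    (e : A ≃ₜ B) (x : A) : connectedComponent (e x) = e '' connectedComponent x := by
  apply le_antisymm
  · intro b hb
    have h1 : e.symm '' connectedComponent (e x) ⊆ connectedComponent (e.symm (e x)) :=
      e.symm.continuous.image_connectedComponent_subset _
    have h2 : e.symm b ∈ connectedComponent x := by
      rw [← e.symm_apply_apply x]
      exact h1 ⟨b, hb, rfl⟩
    exact ⟨e.symm b, h2, e.apply_symm_apply b⟩
  · exact e.continuous.image_connectedComponent_subset x

theorem ccIn_val {Z : Set ℝ} (w : ↥Z) :
    connectedComponentIn Z (w : ℝ) = Subtype.val '' connectedComponent w := by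
  obtain ⟨w, hw⟩ := w
  exact connectedComponentIn_eq_image hw

theorem homeo_ccIn {X Y : Set ℝ} (e : ↥X ≃ₜ ↥Y) (x : ↥X) :
    connectedComponentIn Y ((e x : ℝ)) = Subtype.val '' (e '' connectedComponent x) := by
  rw [ccIn_val (e x), homeo_connectedComponent e x]

theorem closure_val_iff {Z A : Set ℝ} (hA : A ⊆ Z) {z : ↥Z} :
    z ∈ closure (Subtype.val ⁻¹' A : Set ↥Z) ↔ (z : ℝ) ∈ closure A := by
  rw [closure_subtype, image_preimage_eq_inter_range, Subtype.range_coe,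
    inter_eq_self_of_subset_left hA]

theorem mem_sUnion_intervals_iff {Z : Set ℝ} {z : ℝ} :
    z ∈ ⋃₀ intervalsOf Z ↔ z ∈ Z ∧ (connectedComponentIn Z z).Nontrivial := by
  constructor
  · rintro ⟨I, hI, hzI⟩
    refine ⟨interval_subset hI hzI, ?_⟩
    rw [cc_eq_of_mem_interval hI hzI]
    exact hI.2
  · rintro ⟨hz, hnt⟩
    exact ⟨connectedComponentIn Z z, ⟨⟨z, hz, rfl⟩, hnt⟩, mem_connectedComponentIn hz⟩

section Invariance

variable {X Y : Set ℝ} (e : ↥X ≃ₜ ↥Y)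

theorem htriv_iff (w : ↥X) :
    (w : ℝ) ∈ trivCompOf X ↔ ((e w : ℝ)) ∈ trivCompOf Y := by
  have h1 : ((w : ℝ) ∈ trivCompOf X) ↔ connectedComponent w = {w} := by
    constructor
    · intro h
      have h2 := h.2
      rw [ccIn_val w] at h2
      have h3 : ({(w : ℝ)} : Set ℝ) = Subtype.val '' {w} := by rw [image_singleton]
      rw [h3] at h2
      exact (Set.image_eq_image Subtype.val_injective).1 h2
    · intro h
      refine ⟨w.2, ?_⟩
      rw [ccIn_val w, h, image_singleton]
  have h2 : (((e w : ℝ)) ∈ trivCompOf Y) ↔ e '' connectedComponent w = {e w} := by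
    constructor
    · intro h
      have h2 := h.2
      rw [homeo_ccIn e w] at h2
      have h3 : ({((e w : ℝ))} : Set ℝ) = Subtype.val '' {e w} := by rw [image_singleton]
      rw [h3] at h2
      exact (Set.image_eq_image Subtype.val_injective).1 h2
    · intro h
      refine ⟨(e w).2, ?_⟩
      rw [homeo_ccIn e w, h, image_singleton]
  rw [h1, h2]
  constructor
  · intro h; rw [h, image_singleton]
  · intro h
    have h3 : e '' {w} = {e w} := image_singleton
    rw [← h3] at h
    exact (Set.image_eq_image e.injective).1 h

theorem hnt_iff (w : ↥X) :
    (connectedComponentIn X (w : ℝ)).Nontrivial ↔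
      (connectedComponentIn Y ((e w : ℝ))).Nontrivial := by
  rw [ccIn_val w, homeo_ccIn e w, inj_image_nontrivial Subtype.val_injective,
    inj_image_nontrivial Subtype.val_injective, inj_image_nontrivial e.injective]

end Invariance

theorem mcantorval_invariant {X Y : Set ℝ} (hMX : MCantorval X) (e : ↥X ≃ₜ ↥Y) :
    MCantorval Y := by
  have hPreX : Pre X := mc_pre hMX
  have hcompX : IsCompact X := Metric.isCompact_of_isClosed_isBounded hPreX.2.1 hPreX.2.2
  haveI hcsX : CompactSpace ↥X := isCompact_iff_compactSpace.1 hcompX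
  haveI hcsY : CompactSpace ↥Y := e.compactSpace
  have hcompY : IsCompact Y := isCompact_iff_compactSpace.2 hcsY
  have hneY : Y.Nonempty := by
    obtain ⟨x, hx⟩ := hPreX.1
    exact ⟨(e ⟨x, hx⟩).1, (e ⟨x, hx⟩).2⟩
  have hPreY : Pre Y := ⟨hneY, hcompY.isClosed, hcompY.isBounded⟩
  have hsubX : ⋃₀ intervalsOf X ⊆ X := sUnion_subset fun I hI => interval_subset hI
  have hsubY : ⋃₀ intervalsOf Y ⊆ Y := sUnion_subset fun I hI => interval_subset hI
  -- regular closedness of Y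
  have hreg : Y ⊆ closure (⋃₀ intervalsOf Y) := by
    intro y hy
    set x := e.symm ⟨y, hy⟩ with hxdef
    have hx1 : (x : ℝ) ∈ closure (⋃₀ intervalsOf X) := hMX.2.2.1.2 x.2
    have hx2 : x ∈ closure (Subtype.val ⁻¹' (⋃₀ intervalsOf X) : Set ↥X) :=
      (closure_val_iff hsubX).2 hx1
    have hx3 : e x ∈ closure (e '' (Subtype.val ⁻¹' (⋃₀ intervalsOf X) : Set ↥X)) := by
      rw [← e.image_closure]
      exact ⟨x, hx2, rfl⟩
    have hx4 : e '' (Subtype.val ⁻¹' (⋃₀ intervalsOf X) : Set ↥X) =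
        (Subtype.val ⁻¹' (⋃₀ intervalsOf Y) : Set ↥Y) := by
      ext w
      constructor
      · rintro ⟨w', hw', rfl⟩
        rw [mem_preimage] at hw' ⊢
        rw [mem_sUnion_intervals_iff] at hw' ⊢
        exact ⟨(e w').2, ((hnt_iff e w').1 hw'.2)⟩
      · intro hw
        refine ⟨e.symm w, ?_, e.apply_symm_apply w⟩
        rw [mem_preimage] at hw ⊢
        rw [mem_sUnion_intervals_iff] at hw ⊢
        refine ⟨(e.symm w).2, ?_⟩
        rw [hnt_iff e (e.symm w), e.apply_symm_apply]
        exact hw.2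
    rw [hx4] at hx3
    have hx5 : ((e x : ℝ)) ∈ closure (⋃₀ intervalsOf Y) := (closure_val_iff hsubY).1 hx3
    have hx6 : e x = ⟨y, hy⟩ := e.apply_symm_apply _
    rw [hx6] at hx5
    exact hx5
  refine ⟨hneY, hcompY.isBounded, ⟨hcompY.isClosed, hreg⟩, ?_⟩
  -- endpoint condition
  intro I hI e0 hend
  have he0I : e0 ∈ I := by
    rcases hend with h | h
    · exact h.1
    · exact h.1
  have he0Y : e0 ∈ Y := interval_subset hI he0I
  obtain ⟨hIcc, hIlt⟩ := interval_eq_Icc hPreY hI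
  set x₀ := e.symm ⟨e0, he0Y⟩ with hx₀def
  have hx₀ : e x₀ = ⟨e0, he0Y⟩ := e.apply_symm_apply _
  have hccI : connectedComponentIn Y e0 = I := cc_eq_of_mem_interval hI he0I
  have hIrep : I = Subtype.val '' (e '' connectedComponent x₀) := by
    rw [← hccI]
    have : e0 = ((e x₀ : ℝ)) := by rw [hx₀]
    rw [this, homeo_ccIn e x₀]
  set J := connectedComponentIn X (x₀ : ℝ) with hJdef
  have hJrep : J = Subtype.val '' connectedComponent x₀ := ccIn_val x₀
  have hJint : J ∈ intervalsOf X := by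
    refine ⟨⟨(x₀ : ℝ), x₀.2, rfl⟩, ?_⟩
    rw [hnt_iff e x₀]
    have : ((e x₀ : ℝ)) = e0 := by rw [hx₀]
    rw [this, hccI]
    exact hI.2
  obtain ⟨hJIcc, hJlt⟩ := interval_eq_Icc hPreX hJint
  have hx₀J : (x₀ : ℝ) ∈ J := mem_connectedComponentIn x₀.2
  -- the punctured component is preconnected
  have hIdiff : IsPreconnected (I \ {e0}) := by
    rcases hend with h | h
    · have h9 : IsLeast (Icc (sInf I) (sSup I)) (sInf I) := isLeast_Icc (le_of_lt hIlt)
      rw [← hIcc] at h9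
      have : e0 = sInf I := IsLeast.unique h h9
      rw [hIcc, this, Icc_diff_left]
      exact isPreconnected_Ioc
    · have h9 : IsGreatest (Icc (sInf I) (sSup I)) (sSup I) := isGreatest_Icc (le_of_lt hIlt)
      rw [← hIcc] at h9
      have : e0 = sSup I := IsGreatest.unique h h9
      rw [hIcc, this, Icc_sdiff_right]
      exact isPreconnected_Ico
  have hJdiff : IsPreconnected (J \ {(x₀ : ℝ)}) := by
    have hsub : I \ {e0} ⊆ Y := fun z hz => interval_subset hI hz.1
    have h1 : Subtype.val '' (Subtype.val ⁻¹' (I \ {e0}) : Set ↥Y) = I \ {e0} := by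
      rw [image_preimage_eq_inter_range, Subtype.range_coe,
        inter_eq_self_of_subset_left hsub]
    have h2 : IsPreconnected (Subtype.val ⁻¹' (I \ {e0}) : Set ↥Y) := by
      rw [← Topology.IsInducing.subtypeVal.isPreconnected_image, h1]
      exact hIdiff
    have h3 : IsPreconnected (e.symm '' (Subtype.val ⁻¹' (I \ {e0}) : Set ↥Y)) :=
      h2.image _ e.symm.continuous.continuousOn
    have h4 : IsPreconnected (Subtype.val '' (e.symm '' (Subtype.val ⁻¹' (I \ {e0}) : Set ↥Y))) :=
      h3.image _ continuous_subtype_val.continuousOn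
    have h5 : Subtype.val '' (e.symm '' (Subtype.val ⁻¹' (I \ {e0}) : Set ↥Y)) =
        J \ {(x₀ : ℝ)} := by
      have hA : (Subtype.val ⁻¹' (I \ {e0}) : Set ↥Y) =
          (e '' connectedComponent x₀) \ {e x₀} := by
        rw [hIrep]
        have he0 : ({e0} : Set ℝ) = Subtype.val '' {e x₀} := by
          rw [image_singleton, hx₀]
        rw [he0, ← image_diff Subtype.val_injective,
          preimage_image_eq _ Subtype.val_injective]
      rw [hA, image_diff e.symm.injective, image_singleton, e.symm_apply_apply]
      have hsymm : e.symm '' (e '' connectedComponent x₀) = connectedComponent x₀ := by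
        ext z
        constructor
        · rintro ⟨w, ⟨u, hu, rfl⟩, rfl⟩
          rw [e.symm_apply_apply]
          exact hu
        · intro hz
          exact ⟨e z, ⟨z, hz, rfl⟩, e.symm_apply_apply z⟩
      rw [hsymm, image_diff Subtype.val_injective, image_singleton, ← hJrep]
    rwa [h5] at h4
  -- x₀ is an endpoint of J
  have hx₀end : IsLeast J (x₀ : ℝ) ∨ IsGreatest J (x₀ : ℝ) := by
    have hx₀mem : (x₀ : ℝ) ∈ Icc (sInf J) (sSup J) := by rw [← hJIcc]; exact hx₀J
    rcases eq_or_lt_of_le hx₀mem.1 with hceq | hclt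
    · left
      refine ⟨hx₀J, fun j hj => ?_⟩
      rw [← hceq]
      rw [hJIcc] at hj
      exact hj.1
    rcases eq_or_lt_of_le hx₀mem.2 with hdeq | hdlt
    · right
      refine ⟨hx₀J, fun j hj => ?_⟩
      rw [hdeq]
      rw [hJIcc] at hj
      exact hj.2
    exfalso
    have hinfJ : sInf J ∈ J := (interval_isClosed hPreX.2.1 hJint).csInf_mem
      (interval_nonempty hJint) (interval_bdd hPreX hJint).1
    have hsupJ : sSup J ∈ J := (interval_isClosed hPreX.2.1 hJint).csSup_mem
      (interval_nonempty hJint) (interval_bdd hPreX hJint).2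
    have hcJ : sInf J ∈ J \ {(x₀ : ℝ)} := by
      refine ⟨hinfJ, fun hc => ?_⟩
      rw [mem_singleton_iff] at hc
      rw [hc] at hclt
      exact absurd hclt (lt_irrefl _)
    have hdJ : sSup J ∈ J \ {(x₀ : ℝ)} := by
      refine ⟨hsupJ, fun hc => ?_⟩
      rw [mem_singleton_iff] at hc
      rw [hc] at hdlt
      exact absurd hdlt (lt_irrefl _)
    have := (hJdiff.ordConnected).out hcJ hdJ ⟨le_of_lt hclt, le_of_lt hdlt⟩
    exact this.2 rfl
  have hclos : (x₀ : ℝ) ∈ closure (trivCompOf X \ {(x₀ : ℝ)}) :=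
    hMX.2.2.2 J hJint (x₀ : ℝ) hx₀end
  -- transfer the closure statement through e
  have htsubX : trivCompOf X \ {(x₀ : ℝ)} ⊆ X := fun z hz => hz.1.1
  have htsubY : trivCompOf Y \ {e0} ⊆ Y := fun z hz => hz.1.1
  have h5 : x₀ ∈ closure (Subtype.val ⁻¹' (trivCompOf X \ {(x₀ : ℝ)}) : Set ↥X) :=
    (closure_val_iff htsubX).2 hclos
  have h6 : e x₀ ∈ closure (e '' (Subtype.val ⁻¹' (trivCompOf X \ {(x₀ : ℝ)}) : Set ↥X)) := by
    rw [← e.image_closure]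
    exact ⟨x₀, h5, rfl⟩
  have h7 : e '' (Subtype.val ⁻¹' (trivCompOf X \ {(x₀ : ℝ)}) : Set ↥X) =
      (Subtype.val ⁻¹' (trivCompOf Y \ {e0}) : Set ↥Y) := by
    ext w
    constructor
    · rintro ⟨w', hw', rfl⟩
      rw [mem_preimage] at hw' ⊢
      refine ⟨(htriv_iff e w').1 hw'.1, ?_⟩
      intro hc
      apply hw'.2
      rw [mem_singleton_iff] at hc ⊢
      have : e w' = e x₀ := by
        apply Subtype.ext
        rw [hx₀]
        exact hc
      have := e.injective this
      rw [this]
    · intro hw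
      rw [mem_preimage] at hw
      refine ⟨e.symm w, ?_, e.apply_symm_apply w⟩
      rw [mem_preimage]
      constructor
      · have := (htriv_iff e (e.symm w))
        rw [e.apply_symm_apply] at this
        exact this.2 hw.1
      · intro hc
        apply hw.2
        rw [mem_singleton_iff] at hc ⊢
        have : e.symm w = x₀ := Subtype.ext hc
        rw [hx₀def] at this
        have := e.symm.injective this
        rw [this]
  rw [h7] at h6
  have h8 : ((e x₀ : ℝ)) ∈ closure (trivCompOf Y \ {e0}) := (closure_val_iff htsubY).1 h6
  rw [hx₀] at h8
  exact h8

end Tame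

theorem mCantorvals_homeomorphic_and_tame :
    (∀ X Y : Set ℝ, MCantorval X → MCantorval Y →
      ∃ F : ℝ ≃ₜ ℝ, StrictMono F ∧ F '' X = Y) ∧
    (∀ X : Set ℝ, MCantorval X → IsTame X) ∧
    (∀ X : Set ℝ, Nonempty (↥X ≃ₜ (ℕ → Bool)) → IsTame X) := by
  have part1 : ∀ X Y : Set ℝ, MCantorval X → MCantorval Y →
      ∃ F : ℝ ≃ₜ ℝ, StrictMono F ∧ F '' X = Y := by
    intro X Y hX hY
    obtain ⟨Φ, hΦ⟩ := Tame.mc_orderIso hX hY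
    refine ⟨Φ.toHomeomorph, fun a b hab => Φ.strictMono hab, ?_⟩
    exact hΦ
  refine ⟨part1, ?_, ?_⟩
  · intro X hX Y hne
    obtain ⟨e⟩ := hne
    have hY := Tame.mcantorval_invariant hX e
    obtain ⟨F, _, hF⟩ := part1 X Y hX hY
    exact ⟨F, hF⟩
  · intro X hne Y hne2
    obtain ⟨eX⟩ := hne
    obtain ⟨eXY⟩ := hne2
    have hCX := Tame.cantorLike_of_homeo eX
    have hCY := Tame.cantorLike_of_homeo (eXY.symm.trans eX)
    obtain ⟨Φ, hΦ⟩ := Tame.cl_orderIso hCX hCY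
    exact ⟨Φ.toHomeomorph, hΦ⟩
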